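/- arXiv:2509.20897 — 8 statements merged into one kernel-verified Lean document; each statement's English description precedes it below -/
import Mathlib

section
/- Let k ≥ 1 and let f : ℝ → ℝ be (k+1)-times continuously differentiable, and let α ∈ ℝ satisfy f(α) = 0 and f′(α) ≠ 0. Then there exist δ > 0 and C ≥ 0 such that for every x with |x − α| ≤ δ one has A_k(x) ≠ 0 and |(x − f(x)·A_{k−1}(x)/A_k(x)) − α| ≤ C·|x − α|^{k+1}; that is, the iteration x_{n+1} = x_n − f(x_n)·A_{k−1}(x_n)/A_k(x_n) has order of convergence k+1 at a simple root. -/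
/-- The functions `A j` from the proposed root-finding method:
`A 0 = 1`, `A 1 = f'`, `A 2 = (f')² - (1/2) f'' f`, and
`A (j+1) = f' * A j - f * Âⱼ` where
`Âⱼ = ∑_{l=2}^{j+1} (1/l!) (-f)^{l-2} f⁽ˡ⁾ A_{j+1-l}`
(here the inner sum is reindexed by `l = m + 2`). -/
noncomputable def A (f : ℝ → ℝ) : ℕ → ℝ → ℝ
  | 0, _ => 1
  | (j+1), x =>
      deriv f x * A f j x -
        f x * ∑ m ∈ Finset.range j,
          (((m+2).factorial : ℝ))⁻¹ * (-f x) ^ m * iteratedDeriv (m+2) f x *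
            A f (j - 1 - m) x
  termination_by j _ => j
  decreasing_by all_goals omega

open Finset Set Metric

lemma iterDeriv_const (n : ℕ) (c x : ℝ) (hn : n ≠ 0) :
    iteratedDeriv n (fun _ : ℝ => c) x = 0 := by
  induction n generalizing c with
  | zero => omega
  | succ n ih =>
    rw [iteratedDeriv_succ']
    have : (deriv fun _ : ℝ => c) = (fun _ : ℝ => (0:ℝ)) := by
      funext y; exact deriv_const y c
    rw [this]
    rcases Nat.eq_zero_or_pos n with h | h
    · subst h; simp [iteratedDeriv_zero]
    · exact ih 0 (by omega)

lemma iterDerivWithin_of_isOpen {s : Set ℝ} (hs : IsOpen s) {x : ℝ} (hx : x ∈ s)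
    (n : ℕ) (f : ℝ → ℝ) : iteratedDerivWithin n f s x = iteratedDeriv n f x := by
  rw [iteratedDerivWithin_eq_iteratedFDerivWithin, iteratedDeriv_eq_iteratedFDeriv,
    iteratedFDerivWithin_of_isOpen n hs hx]

lemma iterDeriv_add_at {n : ℕ} {p q : ℝ → ℝ} {x : ℝ}
    (hp : ContDiffAt ℝ n p x) (hq : ContDiffAt ℝ n q x) :
    iteratedDeriv n (fun y => p y + q y) x = iteratedDeriv n p x + iteratedDeriv n q x := by
  obtain ⟨u, hu, hxu, hpu⟩ := hp.contDiffOn' le_rfl (by simp)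
  obtain ⟨v, hv, hxv, hqv⟩ := hq.contDiffOn' le_rfl (by simp)
  simp only [insert_eq_of_mem (mem_univ x), univ_inter] at hpu hqv
  have hw : IsOpen (u ∩ v) := hu.inter hv
  have hxw : x ∈ u ∩ v := ⟨hxu, hxv⟩
  rw [← iterDerivWithin_of_isOpen hw hxw n, ← iterDerivWithin_of_isOpen hw hxw n p,
    ← iterDerivWithin_of_isOpen hw hxw n q]
  have : (fun y => p y + q y) = p + q := rfl
  rw [this]
  exact iteratedDerivWithin_add hxw hw.uniqueDiffOn
    ((hpu.mono inter_subset_left) x hxw) ((hqv.mono inter_subset_right) x hxw)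

lemma leibniz_iterDeriv {s : Set ℝ} (hs : IsOpen s) :
    ∀ (n : ℕ) (p q : ℝ → ℝ), (∀ y ∈ s, ContDiffAt ℝ n p y) → (∀ y ∈ s, ContDiffAt ℝ n q y) →
    ∀ x ∈ s, iteratedDeriv n (fun y => p y * q y) x
      = ∑ i ∈ range (n+1), (n.choose i : ℝ) * iteratedDeriv i p x * iteratedDeriv (n-i) q x := by
  intro n
  induction n with
  | zero => intro p q _ _ x _; simp [iteratedDeriv_zero]
  | succ n IH =>
    intro p q hp hq x hx
    have hp' : ContDiffOn ℝ (n+1) p s := fun y hy => (hp y hy).contDiffWithinAt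
    have hq' : ContDiffOn ℝ (n+1) q s := fun y hy => (hq y hy).contDiffWithinAt
    have hdp : ∀ y ∈ s, ContDiffAt ℝ n (deriv p) y := by
      intro y hy
      exact ((hp'.deriv_of_isOpen hs (by norm_cast)) y hy).contDiffAt (hs.mem_nhds hy)
    have hdq : ∀ y ∈ s, ContDiffAt ℝ n (deriv q) y := by
      intro y hy
      exact ((hq'.deriv_of_isOpen hs (by norm_cast)) y hy).contDiffAt (hs.mem_nhds hy)
    have hpn : ∀ y ∈ s, ContDiffAt ℝ n p y := fun y hy => (hp y hy).of_le (by norm_cast; omega)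
    have hqn : ∀ y ∈ s, ContDiffAt ℝ n q y := fun y hy => (hq y hy).of_le (by norm_cast; omega)
    have hdiffp : ∀ y ∈ s, DifferentiableAt ℝ p y := fun y hy =>
      (hp y hy).differentiableAt (by norm_cast)
    have hdiffq : ∀ y ∈ s, DifferentiableAt ℝ q y := fun y hy =>
      (hq y hy).differentiableAt (by norm_cast)
    have heq : Set.EqOn (deriv (fun y => p y * q y))
        (fun y => deriv p y * q y + p y * deriv q y) s := by
      intro y hy
      exact deriv_mul (hdiffp y hy) (hdiffq y hy)
    rw [iteratedDeriv_succ', heq.iteratedDeriv_of_isOpen hs n hx,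
      iterDeriv_add_at (((hdp x hx).mul (hqn x hx))) (((hpn x hx).mul (hdq x hx))),
      IH (deriv p) q hdp hqn x hx, IH p (deriv q) hpn hdq x hx]
    have e1 : ∀ i, iteratedDeriv i (deriv p) x = iteratedDeriv (i+1) p x := by
      intro i; rw [iteratedDeriv_succ']
    have e2 : ∀ i, iteratedDeriv i (deriv q) x = iteratedDeriv (i+1) q x := by
      intro i; rw [iteratedDeriv_succ']
    simp only [e1, e2]
    -- now pure sum manipulation
    rw [Finset.sum_range_succ' (fun i => ((n+1).choose i : ℝ) * iteratedDeriv i p x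
        * iteratedDeriv (n+1-i) q x) (n+1)]
    have key : ∀ i ∈ range (n+1),
        (((n+1).choose (i+1) : ℝ)) * iteratedDeriv (i+1) p x * iteratedDeriv (n+1-(i+1)) q x
        = (n.choose i : ℝ) * iteratedDeriv (i+1) p x * iteratedDeriv (n-i) q x
          + (n.choose (i+1) : ℝ) * iteratedDeriv (i+1) p x * iteratedDeriv (n-i) q x := by
      intro i _
      rw [Nat.succ_sub_succ, Nat.choose_succ_succ]
      push_cast
      ring
    rw [Finset.sum_congr rfl key, Finset.sum_add_distrib]
    have e3 : ∀ i ∈ range (n+1), (n.choose i : ℝ) * iteratedDeriv i p x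
        * iteratedDeriv (n-i+1) q x
        = (n.choose i : ℝ) * iteratedDeriv i p x * iteratedDeriv (n+1-i) q x := by
      intro i hi
      simp only [Finset.mem_range] at hi
      have : n - i + 1 = n + 1 - i := by omega
      rw [this]
    rw [Finset.sum_congr rfl e3,
      Finset.sum_range_succ' (fun i => (n.choose i : ℝ) * iteratedDeriv i p x
        * iteratedDeriv (n+1-i) q x) n]
    have e4 : ∀ i ∈ range n, (n.choose (i+1) : ℝ) * iteratedDeriv (i+1) p x
        * iteratedDeriv (n+1-(i+1)) q x
        = (n.choose (i+1) : ℝ) * iteratedDeriv (i+1) p x * iteratedDeriv (n-i) q x := by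
      intro i _
      rw [Nat.succ_sub_succ]
    rw [Finset.sum_congr rfl e4]
    have e5 : ∑ i ∈ range (n+1), (n.choose (i+1) : ℝ) * iteratedDeriv (i+1) p x
        * iteratedDeriv (n-i) q x
        = ∑ i ∈ range n, (n.choose (i+1) : ℝ) * iteratedDeriv (i+1) p x
          * iteratedDeriv (n-i) q x := by
      rw [Finset.sum_range_succ, Nat.choose_succ_self]
      simp
    rw [e5]
    simp [Nat.choose_zero_right]
    ring

lemma prod_neg_one_sub (m : ℕ) :
    (∏ i ∈ range m, (-1 - (i:ℝ))) = (-1)^m * (m.factorial : ℝ) := by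
  induction m with
  | zero => simp
  | succ m ih =>
    rw [Finset.prod_range_succ, ih, Nat.factorial_succ]
    push_cast
    ring

lemma iterDeriv_inv_shift (α : ℝ) (m : ℕ) {x : ℝ} (hx : x ≠ α) :
    iteratedDeriv m (fun y => (y - α)⁻¹) x
      = (-1)^m * (m.factorial : ℝ) * (x - α) ^ (-1 - (m:ℤ)) := by
  have h1 : (fun y : ℝ => (y - α)⁻¹) = (fun y : ℝ => (y + (-α))⁻¹) := by
    funext y; rw [sub_eq_add_neg]
  rw [h1, iteratedDeriv_comp_add_const m (fun y : ℝ => y⁻¹) (-α)]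
  show iteratedDeriv m (fun y : ℝ => y⁻¹) (x + -α) = _
  have h2 : iteratedDeriv m (fun y : ℝ => y⁻¹) (x + -α) = deriv^[m] Inv.inv (x + -α) := by
    rw [iteratedDeriv_eq_iterate]
  rw [h2, iter_deriv_inv m (x + -α), ← sub_eq_add_neg]

lemma A_succ (f : ℝ → ℝ) (j : ℕ) (x : ℝ) :
    A f (j+1) x = ∑ m ∈ range (j+1),
      ((-1:ℝ)^m * (f x)^m * (((m+1).factorial : ℝ))⁻¹ * iteratedDeriv (m+1) f x)
        * A f (j-m) x := by
  rw [A, Finset.sum_range_succ' (fun m => ((-1:ℝ)^m * (f x)^m * (((m+1).factorial : ℝ))⁻¹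
      * iteratedDeriv (m+1) f x) * A f (j-m) x) j]
  have hterm : ∀ m ∈ range j,
      ((-1:ℝ)^(m+1) * (f x)^(m+1) * (((m+1+1).factorial : ℝ))⁻¹ * iteratedDeriv (m+1+1) f x)
        * A f (j-(m+1)) x
      = -(f x * ((((m+2).factorial : ℝ))⁻¹ * (-f x)^m * iteratedDeriv (m+2) f x
          * A f (j-1-m) x)) := by
    intro m _
    have h1 : j - (m+1) = j - 1 - m := by omega
    have h2 : m + 1 + 1 = m + 2 := by omega
    rw [h1, h2, neg_pow]
    ring
  rw [Finset.sum_congr rfl hterm, Finset.sum_neg_distrib, ← Finset.mul_sum]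
  rw [show ((Nat.factorial 1 : ℕ) : ℝ) = 1 by norm_num, iteratedDeriv_one]
  simp only [Nat.sub_zero]
  ring

lemma A_root {f : ℝ → ℝ} {α : ℝ} (hα : f α = 0) (j : ℕ) :
    A f j α = (deriv f α)^j := by
  induction j with
  | zero => rw [A]; simp
  | succ j ih => rw [A, hα, ih]; ring

lemma A_cont {k : ℕ} {f : ℝ → ℝ} (hf : ContDiff ℝ ((k:ℕ)+1) f) :
    ∀ j, j ≤ k → Continuous (A f j) := by
  intro j
  induction j using Nat.strong_induction_on with
  | _ j IH =>
    match j with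
    | 0 =>
      intro _
      have : A f 0 = fun _ => (1:ℝ) := by funext x; rw [A]
      rw [this]; exact continuous_const
    | (j+1) =>
      intro hj
      have hA : A f (j+1) = fun x => deriv f x * A f j x -
          f x * ∑ m ∈ Finset.range j,
            (((m+2).factorial : ℝ))⁻¹ * (-f x) ^ m * iteratedDeriv (m+2) f x *
              A f (j - 1 - m) x := by funext x; rw [A]
      rw [hA]
      have hfc : Continuous f := hf.continuous
      have hd : Continuous (deriv f) := hf.continuous_deriv (by norm_cast; omega)
      refine ((hd.mul (IH j (by omega) (by omega))).sub (hfc.mul ?_))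
      refine continuous_finset_sum _ (fun m hm => ?_)
      simp only [Finset.mem_range] at hm
      have hid : Continuous (iteratedDeriv (m+2) f) :=
        hf.continuous_iteratedDeriv (m+2) (by norm_cast; omega)
      exact ((continuous_const.mul ((hfc.neg).pow m)).mul hid).mul
        (IH (j-1-m) (by omega) (by omega))

lemma psi_hasDeriv {k : ℕ} {f : ℝ → ℝ} (hf : ContDiff ℝ ((k:ℕ)+1) f) (α : ℝ) :
    ∀ j ≤ k, ∀ y : ℝ,
    HasDerivAt (fun z => ∑ i ∈ range (j+1),
        ((i.factorial : ℝ))⁻¹ * (α - z)^i * iteratedDeriv i f z)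
      (((j.factorial : ℝ))⁻¹ * (α - y)^j * iteratedDeriv (j+1) f y) y := by
  intro j
  induction j with
  | zero =>
    intro _ y
    have hfn : (fun z : ℝ => ∑ i ∈ range (0+1),
        ((i.factorial : ℝ))⁻¹ * (α - z)^i * iteratedDeriv i f z) = f := by
      funext z; simp [iteratedDeriv_zero]
    rw [hfn]
    have hdiff : DifferentiableAt ℝ f y :=
      (hf.differentiable (by norm_cast)).differentiableAt
    simpa [iteratedDeriv_one] using hdiff.hasDerivAt
  | succ j IH =>
    intro hj y
    have hfn : (fun z : ℝ => ∑ i ∈ range (j+1+1),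
        ((i.factorial : ℝ))⁻¹ * (α - z)^i * iteratedDeriv i f z)
        = fun z => (∑ i ∈ range (j+1),
            ((i.factorial : ℝ))⁻¹ * (α - z)^i * iteratedDeriv i f z)
          + (((j+1).factorial : ℝ))⁻¹ * ((α - z)^(j+1) * iteratedDeriv (j+1) f z) := by
      funext z; rw [Finset.sum_range_succ]; ring
    rw [hfn]
    have hq : HasDerivAt (fun z : ℝ => (α - z)^(j+1))
        (((j+1 : ℕ) : ℝ) * (α - y)^(j+1-1) * (-1)) y := by
      have h1 : HasDerivAt (fun z : ℝ => α - z) (-1) y := by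
        simpa using (hasDerivAt_id y).const_sub α
      exact h1.pow (j+1)
    have hdF : DifferentiableAt ℝ (iteratedDeriv (j+1) f) y := by
      have := hf.differentiable_iteratedDeriv (j+1) (by exact_mod_cast Nat.lt_succ_of_le hj)
      exact this.differentiableAt
    have hF : HasDerivAt (iteratedDeriv (j+1) f) (iteratedDeriv (j+2) f y) y := by
      have h := hdF.hasDerivAt
      rwa [← iteratedDeriv_succ] at h
    have hterm := ((hq.mul hF).const_mul (((j+1).factorial : ℝ))⁻¹)
    have := (IH (by omega) y).add hterm
    convert this using 1
    · rfl
    · rfl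
    · rfl
    have hfact : (((j+1).factorial : ℕ) : ℝ) = ((j+1 : ℕ) : ℝ) * (j.factorial : ℝ) := by
      rw [Nat.factorial_succ]; push_cast; ring
    rw [Nat.add_sub_cancel]
    field_simp [hfact]
    rw [hfact]; push_cast
    ring

lemma psi_bound {k : ℕ} {f : ℝ → ℝ} (hf : ContDiff ℝ ((k:ℕ)+1) f) {α : ℝ} (hα : f α = 0)
    {j : ℕ} (hj : j ≤ k) {r Mj : ℝ}
    (hMj : ∀ y ∈ closedBall α r, |iteratedDeriv (j+1) f y| ≤ Mj)
    {x : ℝ} (hx : x ∈ closedBall α r) :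
    |∑ i ∈ range (j+1), ((i.factorial : ℝ))⁻¹ * (α - x)^i * iteratedDeriv i f x|
      ≤ ((j.factorial : ℝ))⁻¹ * Mj * |x - α|^(j+1) := by
  have hxr : |x - α| ≤ r := by rwa [mem_closedBall, Real.dist_eq] at hx
  have hsub : closedBall α |x - α| ⊆ closedBall α r := closedBall_subset_closedBall hxr
  have hmemx : x ∈ closedBall α |x - α| := by rw [mem_closedBall, Real.dist_eq]
  have hmemα : α ∈ closedBall α |x - α| := mem_closedBall_self (abs_nonneg _)
  have hder : ∀ y ∈ closedBall α |x - α|,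
      HasDerivWithinAt (fun z => ∑ i ∈ range (j+1),
          ((i.factorial : ℝ))⁻¹ * (α - z)^i * iteratedDeriv i f z)
        (((j.factorial : ℝ))⁻¹ * (α - y)^j * iteratedDeriv (j+1) f y)
        (closedBall α |x - α|) y :=
    fun y _ => (psi_hasDeriv hf α j hj y).hasDerivWithinAt
  have hbd : ∀ y ∈ closedBall α |x - α|,
      ‖((j.factorial : ℝ))⁻¹ * (α - y)^j * iteratedDeriv (j+1) f y‖
        ≤ ((j.factorial : ℝ))⁻¹ * |x - α|^j * Mj := by
    intro y hy
    have h1 : |α - y| ≤ |x - α| := by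
      rw [mem_closedBall, Real.dist_eq] at hy
      rw [abs_sub_comm]; exact hy
    have h2 : |iteratedDeriv (j+1) f y| ≤ Mj := hMj y (hsub hy)
    rw [Real.norm_eq_abs, abs_mul, abs_mul, abs_inv, abs_pow, Nat.abs_cast]
    gcongr
  have key := Convex.norm_image_sub_le_of_norm_hasDerivWithin_le hder hbd
    (convex_closedBall _ _) hmemα hmemx
  have hψα : ∑ i ∈ range (j+1), ((i.factorial : ℝ))⁻¹ * (α - α)^i * iteratedDeriv i f α
      = 0 := by
    rw [Finset.sum_eq_single 0]
    · simp [iteratedDeriv_zero, hα]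
    · intro i _ hi
      rw [sub_self, zero_pow hi]
      ring
    · intro h; simp at h
  rw [Real.norm_eq_abs, Real.norm_eq_abs, hψα, sub_zero] at key
  calc |∑ i ∈ range (j+1), ((i.factorial : ℝ))⁻¹ * (α - x)^i * iteratedDeriv i f x|
      ≤ ((j.factorial : ℝ))⁻¹ * |x - α|^j * Mj * |x - α| := key
    _ = ((j.factorial : ℝ))⁻¹ * Mj * |x - α|^(j+1) := by ring

lemma u_formula {k : ℕ} {f : ℝ → ℝ} (hf : ContDiff ℝ ((k:ℕ)+1) f) (α : ℝ)
    {j : ℕ} (hj : j ≤ k) {x : ℝ} (hx : x ≠ α) :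
    iteratedDeriv j (fun y => f y * (y - α)⁻¹) x
      = (-1:ℝ)^j * (j.factorial : ℝ) * (x - α) ^ (-1 - (j:ℤ))
        * ∑ i ∈ range (j+1), ((i.factorial : ℝ))⁻¹ * (α - x)^i * iteratedDeriv i f x := by
  have hne : x - α ≠ 0 := sub_ne_zero.mpr hx
  have hs : IsOpen ({α}ᶜ : Set ℝ) := isOpen_compl_singleton
  have hp : ∀ y ∈ ({α}ᶜ : Set ℝ), ContDiffAt ℝ j f y := fun y _ =>
    hf.contDiffAt.of_le (by exact_mod_cast by omega : ((j:ℕ) : WithTop ℕ∞) ≤ ((k:ℕ)+1 : ℕ))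
  have hq : ∀ y ∈ ({α}ᶜ : Set ℝ), ContDiffAt ℝ j (fun y => (y - α)⁻¹) y := by
    intro y hy
    exact (contDiffAt_id.sub contDiffAt_const).inv (sub_ne_zero.mpr hy)
  rw [leibniz_iterDeriv hs j f (fun y => (y - α)⁻¹) hp hq x hx, Finset.mul_sum]
  refine Finset.sum_congr rfl (fun i hi => ?_)
  have hij : i ≤ j := by simp only [Finset.mem_range] at hi; omega
  rw [iterDeriv_inv_shift α (j-i) hx]
  have h2 : (x - α) ^ (-1 - ((j-i:ℕ):ℤ)) = (x - α)^(-1-(j:ℤ)) * (x - α)^i := by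
    have : (-1 - ((j-i:ℕ):ℤ)) = (-1 - (j:ℤ)) + (i:ℤ) := by
      omega
    rw [this, zpow_add₀ hne, zpow_natCast]
  have h3 : ((j.choose i : ℕ):ℝ) * ((i.factorial : ℕ):ℝ) * (((j-i).factorial : ℕ):ℝ)
      = ((j.factorial : ℕ):ℝ) := by
    exact_mod_cast congrArg (Nat.cast : ℕ → ℝ)
      (Nat.choose_mul_factorial_mul_factorial hij)
  have h4 : (α - x)^i = (-1:ℝ)^i * (x-α)^i := by
    rw [show α - x = -(x-α) by ring, neg_pow]
  have h6 : (-1:ℝ)^(j-i) = (-1)^j * (-1)^i := by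
    have hsq : (-1:ℝ)^i * (-1)^i = 1 := by
      rw [← pow_add, show i + i = 2*i by ring, pow_mul]
      norm_num
    calc (-1:ℝ)^(j-i) = (-1)^(j-i) * ((-1)^i * (-1)^i) := by rw [hsq, mul_one]
      _ = ((-1)^(j-i) * (-1)^i) * (-1)^i := by ring
      _ = (-1)^j * (-1)^i := by rw [← pow_add, Nat.sub_add_cancel hij]
  have hfacne : ((i.factorial : ℕ):ℝ) ≠ 0 := by positivity
  rw [h2, h4, h6]
  field_simp
  linear_combination (iteratedDeriv i f x) * h3

lemma g_bound {k : ℕ} {f : ℝ → ℝ} (hf : ContDiff ℝ ((k:ℕ)+1) f) {α c r : ℝ}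
    (hc : 0 < c) (hr : 0 < r)
    (hu_lb : ∀ y ∈ ball α r \ {α}, c ≤ |f y * (y - α)⁻¹|)
    (M : ℕ → ℝ)
    (hM : ∀ i ≤ k, ∀ x ∈ ball α r \ {α},
      |iteratedDeriv i (fun y => f y * (y - α)⁻¹) x| ≤ M i) :
    ∀ j ≤ k, ∃ G, 0 ≤ G ∧ ∀ m ≤ j, ∀ x ∈ ball α r \ {α},
      |iteratedDeriv m (fun y => (f y * (y - α)⁻¹)⁻¹) x| ≤ G := by
  have hsO : IsOpen (ball α r \ {α}) := isOpen_ball.sdiff isClosed_singleton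
  have hy₀ : α + r/2 ∈ ball α r \ {α} := by
    constructor
    · rw [mem_ball, Real.dist_eq]
      rw [show α + r/2 - α = r/2 by ring, abs_of_pos (by linarith)]
      linarith
    · simp only [mem_singleton_iff]
      intro h; nlinarith [h]
  have hM0 : ∀ i ≤ k, 0 ≤ M i := fun i hi =>
    le_trans (abs_nonneg _) (hM i hi _ hy₀)
  have hu_cd : ∀ n : ℕ, n ≤ k → ∀ y ∈ ball α r \ {α},
      ContDiffAt ℝ n (fun y => f y * (y - α)⁻¹) y := by
    intro n hn y hy
    have hyne : y ≠ α := by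
      intro h; exact hy.2 (by simp [h])
    exact ((hf.contDiffAt.of_le (by exact_mod_cast by omega : ((n:ℕ) : WithTop ℕ∞) ≤ ((k:ℕ)+1 : ℕ))).mul
      ((contDiffAt_id.sub contDiffAt_const).inv (sub_ne_zero.mpr hyne)))
  have hu_ne : ∀ y ∈ ball α r \ {α}, f y * (y - α)⁻¹ ≠ 0 := by
    intro y hy
    intro h
    have := hu_lb y hy
    rw [h, abs_zero] at this
    linarith
  have hg_cd : ∀ n : ℕ, n ≤ k → ∀ y ∈ ball α r \ {α},
      ContDiffAt ℝ n (fun y => (f y * (y - α)⁻¹)⁻¹) y := by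
    intro n hn y hy
    exact (hu_cd n hn y hy).inv (hu_ne y hy)
  intro j
  induction j with
  | zero =>
    intro _
    refine ⟨c⁻¹, by positivity, ?_⟩
    intro m hm x hx
    have hm0 : m = 0 := by omega
    subst hm0
    rw [iteratedDeriv_zero, abs_inv]
    exact inv_anti₀ hc (hu_lb x hx)
  | succ j IH =>
    intro hj
    obtain ⟨G, hG0, hG⟩ := IH (by omega)
    set B : ℝ := c⁻¹ * ∑ i ∈ range (j+1),
      ((j+1).choose (i+1) : ℝ) * M (i+1) * G with hB
    have hB0 : 0 ≤ B := by
      apply mul_nonneg (by positivity)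
      apply Finset.sum_nonneg
      intro i hi
      simp only [Finset.mem_range] at hi
      have := hM0 (i+1) (by omega)
      positivity
    refine ⟨max G B, le_trans hG0 (le_max_left _ _), ?_⟩
    intro m hm x hx
    rcases Nat.lt_or_ge m (j+1) with hmj | hmj
    · exact le_trans (hG m (by omega) x hx) (le_max_left _ _)
    · have hmeq : m = j + 1 := by omega
      subst hmeq
      -- Leibniz on u * g = 1
      have hLZ := leibniz_iterDeriv hsO (j+1) (fun y => f y * (y - α)⁻¹)
        (fun y => (f y * (y - α)⁻¹)⁻¹)
        (fun y hy => hu_cd (j+1) hj y hy) (fun y hy => hg_cd (j+1) hj y hy) x hx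
      have hone : Set.EqOn (fun y => (f y * (y - α)⁻¹) * (f y * (y - α)⁻¹)⁻¹)
          (fun _ => (1:ℝ)) (ball α r \ {α}) := by
        intro y hy
        exact mul_inv_cancel₀ (hu_ne y hy)
      have hzero : iteratedDeriv (j+1) (fun y => (f y * (y - α)⁻¹) * (f y * (y - α)⁻¹)⁻¹) x
          = 0 := by
        rw [hone.iteratedDeriv_of_isOpen hsO (j+1) hx]
        exact iterDeriv_const (j+1) 1 x (by omega)
      rw [hzero] at hLZ
      rw [Finset.sum_range_succ' (fun i => ((j+1).choose i : ℝ)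
        * iteratedDeriv i (fun y => f y * (y - α)⁻¹) x
        * iteratedDeriv (j+1-i) (fun y => (f y * (y - α)⁻¹)⁻¹) x) (j+1)] at hLZ
      simp only [Nat.choose_zero_right, Nat.cast_one, one_mul, iteratedDeriv_zero,
        Nat.sub_zero] at hLZ
      have hkey : (f x * (x - α)⁻¹)
            * iteratedDeriv (j+1) (fun y => (f y * (y - α)⁻¹)⁻¹) x
          = -∑ i ∈ range (j+1), ((j+1).choose (i+1) : ℝ)
              * iteratedDeriv (i+1) (fun y => f y * (y - α)⁻¹) x
              * iteratedDeriv (j+1-(i+1)) (fun y => (f y * (y - α)⁻¹)⁻¹) x := by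
        linarith [hLZ]
      have habs : c * |iteratedDeriv (j+1) (fun y => (f y * (y - α)⁻¹)⁻¹) x|
          ≤ ∑ i ∈ range (j+1), ((j+1).choose (i+1) : ℝ) * M (i+1) * G := by
        calc c * |iteratedDeriv (j+1) (fun y => (f y * (y - α)⁻¹)⁻¹) x|
            ≤ |f x * (x - α)⁻¹| * |iteratedDeriv (j+1) (fun y => (f y * (y - α)⁻¹)⁻¹) x| := by
              gcongr
              exact hu_lb x hx
          _ = |(f x * (x - α)⁻¹)
                * iteratedDeriv (j+1) (fun y => (f y * (y - α)⁻¹)⁻¹) x| := (abs_mul _ _).symm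
          _ = |∑ i ∈ range (j+1), ((j+1).choose (i+1) : ℝ)
                * iteratedDeriv (i+1) (fun y => f y * (y - α)⁻¹) x
                * iteratedDeriv (j+1-(i+1)) (fun y => (f y * (y - α)⁻¹)⁻¹) x| := by
              rw [hkey, abs_neg]
          _ ≤ ∑ i ∈ range (j+1), |((j+1).choose (i+1) : ℝ)
                * iteratedDeriv (i+1) (fun y => f y * (y - α)⁻¹) x
                * iteratedDeriv (j+1-(i+1)) (fun y => (f y * (y - α)⁻¹)⁻¹) x| :=
              Finset.abs_sum_le_sum_abs _ _
          _ ≤ ∑ i ∈ range (j+1), ((j+1).choose (i+1) : ℝ) * M (i+1) * G := by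
              apply Finset.sum_le_sum
              intro i hi
              simp only [Finset.mem_range] at hi
              rw [abs_mul, abs_mul, Nat.abs_cast]
              have hMi := hM (i+1) (by omega) x hx
              have hGi := hG (j+1-(i+1)) (by omega) x hx
              gcongr
              · have := hM0 (i+1) (by omega)
                positivity
      have : |iteratedDeriv (j+1) (fun y => (f y * (y - α)⁻¹)⁻¹) x| ≤ B := by
        rw [hB, ← div_eq_inv_mul ..]
        rw [le_div_iff₀ hc]
        linarith [habs]
      exact le_trans this (le_max_right _ _)

lemma LZ {k : ℕ} {f : ℝ → ℝ} (hf : ContDiff ℝ ((k:ℕ)+1) f) {α c r : ℝ}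
    (hc : 0 < c)
    (hu_lb : ∀ y ∈ ball α r \ {α}, c ≤ |f y * (y - α)⁻¹|) :
    ∀ j, 1 ≤ j → j ≤ k → ∀ x ∈ ball α r \ {α},
    ∑ i ∈ range (j+1), (j.choose i : ℝ) * iteratedDeriv i f x
        * iteratedDeriv (j-i) (fun y => (f y * (y - α)⁻¹)⁻¹) x
      = if j = 1 then 1 else 0 := by
  have hsO : IsOpen (ball α r \ {α}) := isOpen_ball.sdiff isClosed_singleton
  have hu_ne : ∀ y ∈ ball α r \ {α}, f y * (y - α)⁻¹ ≠ 0 := by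
    intro y hy h
    have := hu_lb y hy
    rw [h, abs_zero] at this
    linarith
  have hyne : ∀ y ∈ ball α r \ {α}, y ≠ α := by
    intro y hy h
    exact hy.2 (by simp [h])
  intro j hj1 hjk x hx
  have hp : ∀ y ∈ ball α r \ {α}, ContDiffAt ℝ j f y := fun y _ =>
    hf.contDiffAt.of_le (by exact_mod_cast by omega : ((j:ℕ) : WithTop ℕ∞) ≤ ((k:ℕ)+1 : ℕ))
  have hq : ∀ y ∈ ball α r \ {α},
      ContDiffAt ℝ j (fun y => (f y * (y - α)⁻¹)⁻¹) y := by
    intro y hy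
    exact ((hp y hy).mul ((contDiffAt_id.sub contDiffAt_const).inv
      (sub_ne_zero.mpr (hyne y hy)))).inv (hu_ne y hy)
  have hL := leibniz_iterDeriv hsO j f (fun y => (f y * (y - α)⁻¹)⁻¹) hp hq x hx
  have heq : Set.EqOn (fun y => f y * (f y * (y - α)⁻¹)⁻¹) (fun y => y - α)
      (ball α r \ {α}) := by
    intro y hy
    have h1 : f y ≠ 0 := by
      intro h
      exact hu_ne y hy (by rw [h]; ring)
    have h2 : y - α ≠ 0 := sub_ne_zero.mpr (hyne y hy)
    field_simp
  rw [heq.iteratedDeriv_of_isOpen hsO j hx] at hL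
  rw [← hL]
  rcases eq_or_ne j 1 with hj | hj
  · subst hj
    simp [iteratedDeriv_one]
  · have hj2 : 2 ≤ j := by omega
    obtain ⟨m, rfl⟩ : ∃ m, j = m + 1 := ⟨j - 1, by omega⟩
    rw [iteratedDeriv_succ']
    have hder : (deriv fun y : ℝ => y - α) = fun _ : ℝ => (1:ℝ) := by
      funext y
      simp [deriv_sub_const]
    rw [hder, iterDeriv_const m 1 x (by omega)]
    simp [hj]
    omega

lemma main_identity {k : ℕ} {f : ℝ → ℝ} (hf : ContDiff ℝ ((k:ℕ)+1) f) {α c r : ℝ}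
    (hc : 0 < c)
    (hu_lb : ∀ y ∈ ball α r \ {α}, c ≤ |f y * (y - α)⁻¹|) :
    ∀ j, 1 ≤ j → j ≤ k → ∀ x ∈ ball α r \ {α},
    (x - α) * A f j x = f x * A f (j-1) x
      + f x * (-f x)^j * ((j.factorial : ℝ))⁻¹
        * iteratedDeriv j (fun y => (f y * (y - α)⁻¹)⁻¹) x := by
  have hu_ne : ∀ y ∈ ball α r \ {α}, f y * (y - α)⁻¹ ≠ 0 := by
    intro y hy h
    have := hu_lb y hy
    rw [h, abs_zero] at this
    linarith
  have hyne : ∀ y ∈ ball α r \ {α}, y ≠ α := by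
    intro y hy h
    exact hy.2 (by simp [h])
  have hfne : ∀ y ∈ ball α r \ {α}, f y ≠ 0 := by
    intro y hy h
    exact hu_ne y hy (by rw [h]; ring)
  have hfg : ∀ y ∈ ball α r \ {α}, f y * (f y * (y - α)⁻¹)⁻¹ = y - α := by
    intro y hy
    have h2 : y - α ≠ 0 := sub_ne_zero.mpr (hyne y hy)
    field_simp [hfne y hy]
  intro j
  induction j using Nat.strong_induction_on with
  | _ j IH =>
  match j with
  | 0 => intro h; omega
  | (j+1) =>
    intro _ hjk x hx
    have hA0 : A f 0 x = 1 := by rw [A]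
    have hLZ := LZ hf hc hu_lb (j+1) (by omega) hjk x hx
    -- peel the i = 0 term of hLZ
    rw [Finset.sum_range_succ' (fun i => ((j+1).choose i : ℝ) * iteratedDeriv i f x
      * iteratedDeriv (j+1-i) (fun y => (f y * (y - α)⁻¹)⁻¹) x) (j+1)] at hLZ
    simp only [Nat.choose_zero_right, Nat.cast_one, one_mul, iteratedDeriv_zero,
      Nat.sub_zero, Nat.add_sub_add_right] at hLZ
    rcases Nat.eq_zero_or_pos j with hj0 | hj1
    · -- base case j = 0
      subst hj0
      have hA1 : A f 1 x = deriv f x := by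
        rw [A]; simp [hA0]
      simp only [zero_add] at hLZ ⊢
      rw [hA1, show (1:ℕ) - 1 = 0 from rfl, hA0, pow_one]
      simp only [Finset.sum_range_one, zero_add, Nat.choose_self, Nat.cast_one, one_mul,
        Nat.sub_self, iteratedDeriv_zero, iteratedDeriv_one, if_true] at hLZ
      rw [show ((Nat.factorial 1 : ℕ) : ℝ) = 1 by norm_num, inv_one, iteratedDeriv_one]
      have hfgx := hfg x hx
      -- hLZ : deriv f x * g x + f x * G1 = 1
      generalize hgx : (f x * (x - α)⁻¹)⁻¹ = gx at hLZ hfgx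
      linear_combination (f x) * hLZ - (deriv f x) * hfgx
    · -- inductive case j ≥ 1
      rw [A_succ f j x, Finset.mul_sum, Finset.sum_range_succ]
      have hsplit : ∀ m ∈ range j,
          (x - α) * (((-1:ℝ)^m * (f x)^m * (((m+1).factorial : ℝ))⁻¹
              * iteratedDeriv (m+1) f x) * A f (j-m) x)
          = ((-1:ℝ)^m * (f x)^m * (((m+1).factorial : ℝ))⁻¹ * iteratedDeriv (m+1) f x)
              * (f x * A f (j-m-1) x)
            + ((-1:ℝ)^m * (f x)^m * (((m+1).factorial : ℝ))⁻¹ * iteratedDeriv (m+1) f x)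
              * (f x * (-f x)^(j-m) * (((j-m).factorial : ℝ))⁻¹
                * iteratedDeriv (j-m) (fun y => (f y * (y - α)⁻¹)⁻¹) x) := by
        intro m hm
        simp only [Finset.mem_range] at hm
        have hIH := IH (j-m) (by omega) (by omega) (by omega) x hx
        rw [show j - m - 1 = (j-m) - 1 from rfl]
        calc (x - α) * (((-1:ℝ)^m * (f x)^m * (((m+1).factorial : ℝ))⁻¹
                * iteratedDeriv (m+1) f x) * A f (j-m) x)
            = ((-1:ℝ)^m * (f x)^m * (((m+1).factorial : ℝ))⁻¹ * iteratedDeriv (m+1) f x)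
              * ((x - α) * A f (j-m) x) := by ring
          _ = _ := by rw [hIH]; ring
      rw [Finset.sum_congr rfl hsplit, Finset.sum_add_distrib]
      -- first sum = f x * A f j x
      have hAj := A_succ f (j-1) x
      rw [show j - 1 + 1 = j from by omega] at hAj
      have hfirst : ∑ m ∈ range j, ((-1:ℝ)^m * (f x)^m * (((m+1).factorial : ℝ))⁻¹
            * iteratedDeriv (m+1) f x) * (f x * A f (j-m-1) x)
          = f x * A f j x := by
        rw [hAj, Finset.mul_sum]
        refine Finset.sum_congr rfl (fun m hm => ?_)
        rw [show j - 1 - m = j - m - 1 from by omega]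
        ring
      rw [hfirst]
      -- second sum + last term
      have hif : (if j + 1 = 1 then (1:ℝ) else 0) = 0 := by
        rw [if_neg (by omega)]
      rw [hif] at hLZ
      -- hLZ : ∑ i in range (j+1), C(j+1,i+1) F(i+1) G(j-i) + f x * G(j+1) = 0
      have hsecond : ∑ m ∈ range j, ((-1:ℝ)^m * (f x)^m * (((m+1).factorial : ℝ))⁻¹
            * iteratedDeriv (m+1) f x)
            * (f x * (-f x)^(j-m) * (((j-m).factorial : ℝ))⁻¹
              * iteratedDeriv (j-m) (fun y => (f y * (y - α)⁻¹)⁻¹) x)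
          + (x - α) * (((-1:ℝ)^j * (f x)^j * (((j+1).factorial : ℝ))⁻¹
              * iteratedDeriv (j+1) f x) * A f (j-j) x)
          = f x * (-1:ℝ)^j * (f x)^j * (((j+1).factorial : ℝ))⁻¹
            * ∑ i ∈ range (j+1), (((j+1).choose (i+1) : ℕ) : ℝ) * iteratedDeriv (i+1) f x
              * iteratedDeriv (j-i) (fun y => (f y * (y - α)⁻¹)⁻¹) x := by
        rw [Finset.mul_sum, Finset.sum_range_succ]
        congr 1
        · refine Finset.sum_congr rfl (fun m hm => ?_)
          simp only [Finset.mem_range] at hm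
          have hfact : (((j+1).choose (m+1) : ℕ) : ℝ) * ((m+1).factorial : ℝ)
              * (((j-m).factorial : ℝ)) = (((j+1).factorial : ℕ) : ℝ) := by
            have h := Nat.choose_mul_factorial_mul_factorial
              (show m+1 ≤ j+1 by omega)
            rw [show j + 1 - (m+1) = j - m from by omega] at h
            exact_mod_cast congrArg (Nat.cast : ℕ → ℝ) h
          have hsign : (-1:ℝ)^m * (-1:ℝ)^(j-m) = (-1)^j := by
            rw [← pow_add, show m + (j-m) = j from by omega]
          have hpow : (f x)^m * (f x)^(j-m) = (f x)^j := by
            rw [← pow_add, show m + (j-m) = j from by omega]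
          have hnegpow : (-f x)^(j-m) = (-1:ℝ)^(j-m) * (f x)^(j-m) := by
            rw [neg_pow]
          rw [hnegpow]
          have hscalar : ((-1:ℝ)^m * (f x)^m * (((m+1).factorial : ℝ))⁻¹)
              * ((-1:ℝ)^(j-m) * (f x)^(j-m) * (((j-m).factorial : ℝ))⁻¹)
              = (-1:ℝ)^j * (f x)^j * (((j+1).factorial : ℝ))⁻¹
                * (((j+1).choose (m+1) : ℕ) : ℝ) := by
            have hfacne1 : ((m+1).factorial : ℝ) ≠ 0 := by positivity
            have hfacne2 : (((j-m).factorial : ℕ) : ℝ) ≠ 0 := by positivity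
            have hfacne3 : (((j+1).factorial : ℕ) : ℝ) ≠ 0 := by positivity
            field_simp
            linear_combination ((((j+1).factorial : ℕ) : ℝ) * (f x)^m * (f x)^(j-m)) * hsign
              + ((((j+1).factorial : ℕ) : ℝ) * (-1:ℝ)^j) * hpow
              - ((f x)^j * (-1:ℝ)^j) * hfact
          linear_combination (iteratedDeriv (m+1) f x
            * iteratedDeriv (j-m) (fun y => (f y * (y - α)⁻¹)⁻¹) x * f x) * hscalar
        · -- last term: i = j
          rw [show j - j = 0 from by omega, hA0, Nat.choose_self,
            iteratedDeriv_zero]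
          have hfgx := hfg x hx
          generalize hgx : (f x * (x - α)⁻¹)⁻¹ = gx at hfgx ⊢
          rw [← hfgx]
          ring
      rw [add_assoc, hsecond]
      -- use hLZ to finish
      have hGsum : ∑ i ∈ range (j+1), (((j+1).choose (i+1) : ℕ) : ℝ) * iteratedDeriv (i+1) f x
            * iteratedDeriv (j-i) (fun y => (f y * (y - α)⁻¹)⁻¹) x
          = - (f x * iteratedDeriv (j+1) (fun y => (f y * (y - α)⁻¹)⁻¹) x) := by
        linarith [hLZ]
      rw [hGsum, show (j+1) - 1 = j from by omega]
      have hnegpow : (-f x)^(j+1) = (-1:ℝ)^(j+1) * (f x)^(j+1) := by rw [neg_pow]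
      rw [hnegpow]
      ring

/-- The iteration `x_{n+1} = x_n - f(x_n) A_{k-1}(x_n) / A_k(x_n)` has order of
convergence `k+1` at a simple root `α` of `f`. -/
theorem proposed_method_order_of_convergence
    (k : ℕ) (hk : 1 ≤ k) (f : ℝ → ℝ) (hf : ContDiff ℝ (k + 1 : ℕ) f)
    (α : ℝ) (hα : f α = 0) (hα' : deriv f α ≠ 0) :
    ∃ δ > 0, ∃ C ≥ (0 : ℝ), ∀ x : ℝ, |x - α| ≤ δ →
      A f k x ≠ 0 ∧
      |(x - f x * A f (k - 1) x / A f k x) - α| ≤ C * |x - α| ^ (k + 1) := by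
  have hf' : ContDiff ℝ ((k:ℕ)+1) f := by exact_mod_cast hf
  set c : ℝ := |deriv f α| / 2 with hc_def
  have hc : 0 < c := by positivity
  -- Step 1: lower bound for |u| near α
  have hder : HasDerivAt f (deriv f α) α :=
    ((hf'.differentiable (by norm_cast)) α).hasDerivAt
  have hlo := (hasDerivAt_iff_isLittleO.mp hder).bound hc
  rw [Metric.eventually_nhds_iff] at hlo
  obtain ⟨r₀, hr₀, hH⟩ := hlo
  have hu_lb0 : ∀ y, dist y α < r₀ → y ≠ α → c ≤ |f y * (y - α)⁻¹| := by
    intro y hyr hyα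
    have h1 := hH hyr
    have hne : y - α ≠ 0 := sub_ne_zero.mpr hyα
    have habs : |y - α| ≠ 0 := abs_ne_zero.mpr hne
    rw [hα, sub_zero, smul_eq_mul, Real.norm_eq_abs, Real.norm_eq_abs] at h1
    have h2 : |f y * (y - α)⁻¹ - deriv f α| ≤ c := by
      have h3 : f y * (y - α)⁻¹ - deriv f α = (f y - (y - α) * deriv f α) * (y - α)⁻¹ := by
        field_simp
      have h1' : |f y - (y - α) * deriv f α| ≤ c * |y - α| := h1
      rw [h3, abs_mul, abs_inv]
      calc |f y - (y - α) * deriv f α| * |y - α|⁻¹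
          ≤ (c * |y - α|) * |y - α|⁻¹ := by gcongr
        _ = c := by field_simp
    have h4 : |deriv f α| - |f y * (y - α)⁻¹| ≤ c := by
      calc |deriv f α| - |f y * (y - α)⁻¹| ≤ |deriv f α - f y * (y - α)⁻¹| :=
            abs_sub_abs_le_abs_sub _ _
        _ = |f y * (y - α)⁻¹ - deriv f α| := abs_sub_comm _ _
        _ ≤ c := h2
    have : |deriv f α| = 2 * c := by rw [hc_def]; ring
    linarith
  -- Step 2: lower bound for |A f k| near α
  set cA : ℝ := |deriv f α|^k / 2 with hcA_def
  have hcA : 0 < cA := by positivity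
  have hAkα : |A f k α| = |deriv f α|^k := by
    rw [A_root hα k, abs_pow]
  have hAcont : ContinuousAt (A f k) α := (A_cont hf' k le_rfl).continuousAt
  have hev : ∀ᶠ x in nhds α, |A f k x - A f k α| < cA := by
    have := hAcont.tendsto
    have h5 : Metric.ball (A f k α) cA ∈ nhds (A f k α) := Metric.ball_mem_nhds _ hcA
    filter_upwards [this h5] with x hx
    simp only [Set.mem_preimage, Metric.mem_ball, Real.dist_eq] at hx
    exact hx
  rw [Metric.eventually_nhds_iff] at hev
  obtain ⟨r₁, hr₁, hA_lb0⟩ := hev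
  have hA_lb : ∀ y, dist y α < r₁ → cA ≤ |A f k y| := by
    intro y hy
    have h1 := hA_lb0 hy
    have h2 : |A f k α| - |A f k y| ≤ |A f k y - A f k α| := by
      rw [abs_sub_comm]
      exact abs_sub_abs_le_abs_sub _ _
    rw [hAkα] at h2
    have : |deriv f α|^k = 2 * cA := by rw [hcA_def]; ring
    linarith
  -- Step 3: radii
  set ρ : ℝ := min r₀ r₁ / 2 with hρ_def
  have hρ : 0 < ρ := by positivity
  have hρr₀ : ρ < r₀ := by
    have := min_le_left r₀ r₁
    have := lt_min hr₀ hr₁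
    simp only [hρ_def]
    cases' le_total r₀ r₁ with h h <;> simp [min_eq_left, min_eq_right, h] <;> linarith
  have hρr₁ : ρ < r₁ := by
    simp only [hρ_def]
    cases' le_total r₀ r₁ with h h <;> simp [min_eq_left, min_eq_right, h] <;> linarith
  have hu_lb : ∀ y ∈ ball α ρ \ {α}, c ≤ |f y * (y - α)⁻¹| := by
    intro y hy
    have hy1 : dist y α < r₀ := by
      have := hy.1
      rw [mem_ball] at this
      linarith
    have hy2 : y ≠ α := by
      intro h; exact hy.2 (by simp [h])
    exact hu_lb0 y hy1 hy2
  -- Step 4: bounds on derivatives of u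
  have hMex : ∀ i : ℕ, ∃ Mi, 0 ≤ Mi ∧ (i ≤ k → ∀ y ∈ closedBall α ρ,
      |iteratedDeriv (i+1) f y| ≤ Mi) := by
    intro i
    rcases Nat.lt_or_ge k i with h | h
    · exact ⟨0, le_refl _, fun hik => by omega⟩
    · have hcont : ContinuousOn (iteratedDeriv (i+1) f) (closedBall α ρ) :=
        (hf'.continuous_iteratedDeriv (i+1) (by exact_mod_cast by omega :
          ((i+1:ℕ) : WithTop ℕ∞) ≤ ((k:ℕ)+1 : ℕ))).continuousOn
      obtain ⟨Mi, hMi⟩ := (isCompact_closedBall α ρ).exists_bound_of_continuousOn hcont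
      refine ⟨max Mi 0, le_max_right _ _, fun _ y hy => ?_⟩
      exact le_trans (by rw [← Real.norm_eq_abs]; exact hMi y hy) (le_max_left _ _)
  choose M hM0 hMf using hMex
  have hMu : ∀ i ≤ k, ∀ x ∈ ball α ρ \ {α},
      |iteratedDeriv i (fun y => f y * (y - α)⁻¹) x| ≤ M i := by
    intro i hik x hx
    have hxα : x ≠ α := by intro h; exact hx.2 (by simp [h])
    have hxcb : x ∈ closedBall α ρ := ball_subset_closedBall hx.1
    have hne : x - α ≠ 0 := sub_ne_zero.mpr hxα
    have habsne : |x - α| ≠ 0 := abs_ne_zero.mpr hne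
    rw [u_formula hf' α hik hxα]
    rw [abs_mul, abs_mul, abs_mul, abs_pow, abs_neg, abs_one, one_pow, one_mul,
      Nat.abs_cast]
    have hzp : |(x - α) ^ (-1 - (i:ℤ))| = (|x - α|^(i+1))⁻¹ := by
      rw [show (-1 - (i:ℤ)) = -((i+1:ℕ):ℤ) by push_cast; ring, zpow_neg, zpow_natCast,
        abs_inv, abs_pow]
    rw [hzp]
    have hpsi := psi_bound hf' hα hik (hMf i hik) hxcb
    have habspos : (0:ℝ) < |x - α| := abs_pos.mpr hne
    have hfacne : (i.factorial : ℝ) ≠ 0 := by positivity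
    calc (i.factorial : ℝ) * (|x - α|^(i+1))⁻¹
          * |∑ l ∈ range (i+1), ((l.factorial : ℝ))⁻¹ * (α - x)^l * iteratedDeriv l f x|
        ≤ (i.factorial : ℝ) * (|x - α|^(i+1))⁻¹
          * (((i.factorial : ℝ))⁻¹ * M i * |x - α|^(i+1)) := by gcongr
      _ = M i := by field_simp
  -- Step 5: bound on derivatives of g
  obtain ⟨G, hG0, hG⟩ := g_bound hf' hc hρ hu_lb M hMu k le_rfl
  -- Step 6: Lipschitz bound for f
  obtain ⟨L0, hL0⟩ := (isCompact_closedBall α ρ).exists_bound_of_continuousOn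
    ((hf'.continuous_deriv (by norm_cast; omega)).continuousOn)
  set L : ℝ := max L0 0 with hL_def
  have hL0' : 0 ≤ L := le_max_right _ _
  have hLip : ∀ x ∈ closedBall α ρ, |f x| ≤ L * |x - α| := by
    intro x hx
    have hder2 : ∀ y ∈ closedBall α ρ, HasDerivWithinAt f (deriv f y) (closedBall α ρ) y :=
      fun y _ => (((hf'.differentiable (by norm_cast)) y).hasDerivAt).hasDerivWithinAt
    have hbd : ∀ y ∈ closedBall α ρ, ‖deriv f y‖ ≤ L :=
      fun y hy => le_trans (hL0 y hy) (le_max_left _ _)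
    have := Convex.norm_image_sub_le_of_norm_hasDerivWithin_le hder2 hbd
      (convex_closedBall _ _) (mem_closedBall_self hρ.le) hx
    rw [Real.norm_eq_abs, Real.norm_eq_abs, hα, sub_zero] at this
    exact this
  -- Final assembly
  refine ⟨ρ/2, by positivity, L^(k+1) * G * ((k.factorial : ℝ))⁻¹ / cA, by positivity, ?_⟩
  intro x hxδ
  have hxball : x ∈ ball α ρ := by
    rw [mem_ball, Real.dist_eq]
    linarith
  have hxr₁ : dist x α < r₁ := by
    rw [Real.dist_eq]
    linarith [hρr₁]
  have hAk_lb := hA_lb x hxr₁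
  have hAkne : A f k x ≠ 0 := by
    intro h
    rw [h, abs_zero] at hAk_lb
    linarith
  refine ⟨hAkne, ?_⟩
  rcases eq_or_ne x α with rfl | hxα
  · simp [hα]
  · have hxS : x ∈ ball α ρ \ {α} := ⟨hxball, by simp [hxα]⟩
    have hident := main_identity hf' hc hu_lb k hk le_rfl x hxS
    have h1 : x - f x * A f (k-1) x / A f k x - α
        = ((x - α) * A f k x - f x * A f (k-1) x) / A f k x := by
      field_simp
      ring
    have h2 : (x - α) * A f k x - f x * A f (k-1) x
        = f x * (-f x)^k * ((k.factorial : ℝ))⁻¹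
          * iteratedDeriv k (fun y => (f y * (y - α)⁻¹)⁻¹) x := by
      rw [hident]; ring
    rw [h1, h2, abs_div]
    have hfx : |f x| ≤ L * |x - α| := hLip x (ball_subset_closedBall hxball)
    have hGk : |iteratedDeriv k (fun y => (f y * (y - α)⁻¹)⁻¹) x| ≤ G :=
      hG k le_rfl x hxS
    have hnum : |f x * (-f x)^k * ((k.factorial : ℝ))⁻¹
          * iteratedDeriv k (fun y => (f y * (y - α)⁻¹)⁻¹) x|
        ≤ (L * |x - α|)^(k+1) * ((k.factorial : ℝ))⁻¹ * G := by
      rw [abs_mul, abs_mul, abs_mul, abs_pow, abs_neg, abs_inv, Nat.abs_cast]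
      calc |f x| * |f x|^k * ((k.factorial : ℝ))⁻¹
            * |iteratedDeriv k (fun y => (f y * (y - α)⁻¹)⁻¹) x|
          ≤ (L * |x - α|) * (L * |x - α|)^k * ((k.factorial : ℝ))⁻¹ * G := by
            gcongr
          _ = (L * |x - α|)^(k+1) * ((k.factorial : ℝ))⁻¹ * G := by
            rw [pow_succ]; ring
    calc |f x * (-f x)^k * ((k.factorial : ℝ))⁻¹
          * iteratedDeriv k (fun y => (f y * (y - α)⁻¹)⁻¹) x| / |A f k x|
        ≤ ((L * |x - α|)^(k+1) * ((k.factorial : ℝ))⁻¹ * G) / cA := by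
          apply div_le_div₀ (by positivity) hnum hcA hAk_lb
      _ = (L^(k+1) * G * ((k.factorial : ℝ))⁻¹ / cA) * |x - α|^(k+1) := by
          rw [mul_pow]
          ring
end

section
/- Let f : ℝ → ℝ be smooth with f(x) ≠ 0 for all x, let k ≥ 1, and let x ∈ ℝ be a point where A_k(x) ≠ 0. Then k·(1/f)^{(k−1)}(x) / (1/f)^{(k)}(x) = − f(x)·A_{k−1}(x)/A_k(x), where (1/f)^{(j)} denotes the j-th derivative of the reciprocal function x ↦ 1/f(x). In particular, the k-th order Householder iteration x_{n+1} = x_n + k·(1/f)^{(k−1)}(x_n)/(1/f)^{(k)}(x_n) coincides with the iteration x_{n+1} = x_n − f(x_n)·A_{k−1}(x_n)/A_k(x_n). -/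
lemma diffIter {f : ℝ → ℝ} (hf : ContDiff ℝ (⊤:ℕ∞) f) (m : ℕ) :
    Differentiable ℝ (iteratedDeriv m f) :=
  hf.differentiable_iteratedDeriv m (by exact_mod_cast lt_top_iff_ne_top.2 (by simp))

lemma iteratedDeriv_one_fun (n : ℕ) : iteratedDeriv (n+1) (fun _ : ℝ => (1:ℝ)) = fun _ => 0 := by
  induction n with
  | zero => funext x; simp [iteratedDeriv_one]
  | succ n ih => rw [iteratedDeriv_succ, ih]; funext x; simp

lemma perterm (P D Aq : ℝ) (hP : P ≠ 0) (m q : ℕ) :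
    (((q+m+2).choose (m+2) : ℝ)) * D * ((-1)^q * (q.factorial:ℝ) * Aq / P^(q+1))
    = (-1)^(q+m+2) * (((q+m+2).factorial : ℝ)) *
        (P * ((((m+2).factorial:ℝ))⁻¹ * (-P)^m * D * Aq)) / P^(q+m+2) := by
  have hfac : (((q+m+2).factorial : ℕ) : ℝ)
      = ((q+m+2).choose (m+2) : ℝ) * ((m+2).factorial : ℝ) * (q.factorial : ℝ) := by
    have h := Nat.choose_mul_factorial_mul_factorial (show m+2 ≤ q+m+2 by omega)
    have h2 : q+m+2 - (m+2) = q := by omega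
    rw [h2] at h
    exact_mod_cast h.symm
  have hm2 : ((m+2).factorial : ℝ) ≠ 0 := by positivity
  have hsq : ((-1:ℝ))^m * ((-1:ℝ))^m = 1 := by
    rw [← pow_add, ← two_mul, pow_mul]; norm_num
  rw [hfac, neg_pow]
  have hpow : P^(q+m+2) = P^(q+1) * P^(m+1) := by rw [← pow_add]; ring_nf
  rw [hpow]
  have h1 : ((-1:ℝ))^(q+m+2) = (-1)^q * ((-1)^m * 1) := by
    rw [pow_add, pow_add]; norm_num
  rw [h1]
  field_simp
  ring_nf
  simp [pow_mul]
  rw [show (((-1:ℝ))^m)^2 = 1 by rw [← pow_mul, mul_comm, pow_mul]; norm_num, mul_one]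
lemma leibniz {f g : ℝ → ℝ} (hf : ContDiff ℝ (⊤:ℕ∞) f) (hg : ContDiff ℝ (⊤:ℕ∞) g) (n : ℕ) :
    iteratedDeriv n (fun y => f y * g y) = fun x =>
      ∑ l ∈ Finset.range (n+1),
        (n.choose l : ℝ) * iteratedDeriv l f x * iteratedDeriv (n-l) g x := by
  induction n with
  | zero => simp
  | succ n ih =>
    rw [iteratedDeriv_succ, ih]
    funext x
    rw [deriv_fun_sum (fun l _ => by
      exact (((diffIter hf l).differentiableAt.const_mul _).mul (diffIter hg (n-l)).differentiableAt))]
    have hterm : ∀ l ∈ Finset.range (n+1),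
        deriv (fun x => (n.choose l : ℝ) * iteratedDeriv l f x * iteratedDeriv (n-l) g x) x
        = (n.choose l : ℝ) * (iteratedDeriv (l+1) f x * iteratedDeriv (n-l) g x
            + iteratedDeriv l f x * iteratedDeriv (n-l+1) g x) := by
      intro l _
      have h1 : (fun x => (n.choose l : ℝ) * iteratedDeriv l f x * iteratedDeriv (n-l) g x)
          = fun x => (n.choose l : ℝ) * (iteratedDeriv l f x * iteratedDeriv (n-l) g x) := by
        funext y; ring
      rw [h1, deriv_const_mul (d := fun y => iteratedDeriv l f y * iteratedDeriv (n-l) g y) _ (((diffIter hf l).differentiableAt).mul (diffIter hg (n-l)).differentiableAt),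
        deriv_fun_mul (diffIter hf l).differentiableAt (diffIter hg (n-l)).differentiableAt,
        ← iteratedDeriv_succ, ← iteratedDeriv_succ]
    rw [Finset.sum_congr rfl hterm]
    have split : ∑ l ∈ Finset.range (n+1),
        (n.choose l : ℝ) * (iteratedDeriv (l+1) f x * iteratedDeriv (n-l) g x
            + iteratedDeriv l f x * iteratedDeriv (n-l+1) g x)
        = (∑ l ∈ Finset.range (n+1), (n.choose l : ℝ) * iteratedDeriv (l+1) f x * iteratedDeriv (n-l) g x)
          + ∑ l ∈ Finset.range (n+1), (n.choose l : ℝ) * iteratedDeriv l f x * iteratedDeriv (n-l+1) g x := by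
      rw [← Finset.sum_add_distrib]; apply Finset.sum_congr rfl; intro l _; ring
    rw [split]
    -- second sum: peel off l = 0
    rw [Finset.sum_range_succ' (fun l => (n.choose l : ℝ) * iteratedDeriv l f x * iteratedDeriv (n-l+1) g x)]
    -- LHS target: peel off l = 0
    rw [Finset.sum_range_succ' (fun l => ((n+1).choose l : ℝ) * iteratedDeriv l f x * iteratedDeriv (n+1-l) g x)]
    have e0 : ∀ l ∈ Finset.range (n+1),
        (((n+1).choose (l+1) : ℕ) : ℝ) * iteratedDeriv (l+1) f x * iteratedDeriv (n+1-(l+1)) g x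
        = (n.choose l : ℝ) * iteratedDeriv (l+1) f x * iteratedDeriv (n-l) g x
          + (n.choose (l+1) : ℝ) * iteratedDeriv (l+1) f x * iteratedDeriv (n-l) g x := by
      intro l hl
      have : n+1-(l+1) = n - l := by omega
      rw [this, Nat.choose_succ_succ, Nat.cast_add]
      ring
    rw [Finset.sum_congr rfl e0, Finset.sum_add_distrib]
    have e1 : ∑ l ∈ Finset.range n, (n.choose (l+1) : ℝ) * iteratedDeriv (l+1) f x * iteratedDeriv (n-(l+1)+1) g x
        = ∑ l ∈ Finset.range (n+1), (n.choose (l+1) : ℝ) * iteratedDeriv (l+1) f x * iteratedDeriv (n-l) g x := by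
      rw [Finset.sum_range_succ]
      have : (n.choose (n+1) : ℝ) = 0 := by simp [Nat.choose_eq_zero_of_lt]
      rw [this]
      simp only [zero_mul, add_zero]
      apply Finset.sum_congr rfl
      intro l hl
      have : n - (l+1) + 1 = n - l := by
        have := Finset.mem_range.1 hl; omega
      rw [this]
    rw [e1]
    simp only [Nat.choose_zero_right, Nat.cast_one, iteratedDeriv_zero, Nat.sub_zero]
    ring

lemma key {f : ℝ → ℝ} (hf : ContDiff ℝ (⊤:ℕ∞) f) (hf0 : ∀ x, f x ≠ 0) (n : ℕ) (x : ℝ) :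
    iteratedDeriv n (fun y => 1 / f y) x
      = (-1)^n * (n.factorial : ℝ) * A f n x / f x ^ (n+1) := by
  induction n using Nat.strong_induction_on generalizing x with
  | _ n ih =>
    have hg : ContDiff ℝ (⊤:ℕ∞) (fun y => 1 / f y) := by
      simp only [one_div]; exact hf.inv hf0
    match n with
    | 0 => simp [A, iteratedDeriv_zero]
    | (j+1) =>
      have hP : f x ≠ 0 := hf0 x
      have hmul : (fun y => f y * (1 / f y)) = fun _ => (1:ℝ) := by
        funext y; rw [mul_one_div, div_self (hf0 y)]
      have h0 : (∑ l ∈ Finset.range (j+2),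
          ((j+1).choose l : ℝ) * iteratedDeriv l f x *
            iteratedDeriv (j+1-l) (fun y => 1 / f y) x) = 0 := by
        have hl := congrFun (leibniz hf hg (j+1)) x
        rw [hmul, iteratedDeriv_one_fun] at hl
        simpa using hl.symm
      rw [Finset.sum_range_succ'] at h0
      simp only [Nat.choose_zero_right, Nat.cast_one, one_mul, iteratedDeriv_zero,
        Nat.sub_zero] at h0
      -- rewrite the inner derivatives of 1/f using the IH
      have hrw : ∀ i ∈ Finset.range (j+1),
          ((j+1).choose (i+1) : ℝ) * iteratedDeriv (i+1) f x *
            iteratedDeriv (j+1-(i+1)) (fun y => 1 / f y) x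
          = ((j+1).choose (i+1) : ℝ) * iteratedDeriv (i+1) f x *
            ((-1)^(j-i) * ((j-i).factorial : ℝ) * A f (j-i) x / f x ^ (j-i+1)) := by
        intro i hi
        have h1 : j + 1 - (i+1) = j - i := by omega
        rw [h1, ih (j-i) (by omega)]
      rw [Finset.sum_congr rfl hrw] at h0
      -- the sum equals - (-1)^(j+1) (j+1)! A_{j+1} / f^(j+1)
      have hsum : (∑ i ∈ Finset.range (j+1),
          ((j+1).choose (i+1) : ℝ) * iteratedDeriv (i+1) f x *
            ((-1)^(j-i) * ((j-i).factorial : ℝ) * A f (j-i) x / f x ^ (j-i+1)))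
          = -((-1)^(j+1) * (((j+1).factorial : ℕ) : ℝ) * A f (j+1) x / f x ^ (j+1)) := by
        have hA : A f (j+1) x = iteratedDeriv 1 f x * A f j x -
            f x * ∑ m ∈ Finset.range j,
              (((m+2).factorial : ℝ))⁻¹ * (-f x) ^ m * iteratedDeriv (m+2) f x *
                A f (j - 1 - m) x := by
          rw [A, iteratedDeriv_one]
        rw [hA]
        rw [Finset.sum_range_succ']
        have hexp : -((-1)^(j+1) * (((j+1).factorial : ℕ) : ℝ) *
            (iteratedDeriv 1 f x * A f j x -
              f x * ∑ m ∈ Finset.range j,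
                (((m+2).factorial : ℝ))⁻¹ * (-f x) ^ m * iteratedDeriv (m+2) f x *
                  A f (j - 1 - m) x) / f x ^ (j+1))
            = (∑ m ∈ Finset.range j,
                (-1)^(j+1) * (((j+1).factorial : ℕ) : ℝ) *
                  (f x * ((((m+2).factorial : ℝ))⁻¹ * (-f x) ^ m * iteratedDeriv (m+2) f x *
                    A f (j - 1 - m) x)) / f x ^ (j+1))
              + -((-1)^(j+1) * (((j+1).factorial : ℕ) : ℝ) *
                  (iteratedDeriv 1 f x * A f j x) / f x ^ (j+1)) := by
          rw [← Finset.sum_div, ← Finset.mul_sum, ← Finset.mul_sum]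
          ring
        rw [hexp]
        congr 1
        · apply Finset.sum_congr rfl
          intro m hm
          have hmlt : m < j := Finset.mem_range.1 hm
          have hq1 : j - (m+1) = j - 1 - m := by omega
          have hq2 : j + 1 = (j-1-m) + m + 2 := by omega
          rw [hq1]
          rw [show ((j+1).choose (m+1+1) : ℝ) = (((j-1-m)+m+2).choose (m+2) : ℝ) by
            rw [← hq2]]
          rw [show ((-1:ℝ))^(j+1) = ((-1:ℝ))^((j-1-m)+m+2) by rw [← hq2]]
          rw [show (((j+1).factorial : ℕ) : ℝ) = ((((j-1-m)+m+2).factorial : ℕ) : ℝ) by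
            rw [← hq2]]
          rw [show f x ^ (j+1) = f x ^ ((j-1-m)+m+2) by rw [← hq2]]
          rw [show m + 1 + 1 = m + 2 from rfl]
          exact perterm (f x) (iteratedDeriv (m+2) f x) (A f (j-1-m) x) hP m (j-1-m)
        · -- the i = 0 term
          have hc1 : ((j+1).choose (0+1) : ℝ) = (j+1 : ℝ) := by
            simp [Nat.choose_one_right]
          rw [show j - 0 = j from rfl, hc1]
          rw [show (((j+1).factorial : ℕ) : ℝ) = ((j:ℝ)+1) * (j.factorial : ℝ) by
            rw [Nat.factorial_succ]; push_cast; ring]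
          rw [pow_succ]
          ring
      rw [hsum] at h0
      -- h0 : f x * iteratedDeriv (j+1) (1/f) x + -(...) = 0  (order?)
      have hPn : f x ^ (j+1) ≠ 0 := pow_ne_zero _ hP
      have hres : f x * iteratedDeriv (j+1) (fun y => 1 / f y) x
          = (-1)^(j+1) * (((j+1).factorial : ℕ) : ℝ) * A f (j+1) x / f x ^ (j+1) := by
        linarith [h0]
      rw [show (j:ℕ)+1+1 = j+2 from rfl]
      field_simp at hres ⊢
      rw [show f x ^ (j+2) = f x ^ (j+1) * f x by ring] at *
      nlinarith [hres, hPn]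

/-- The `k`-th order Householder correction `k (1/f)^{(k-1)} / (1/f)^{(k)}`
equals `- f A_{k-1} / A_k`; hence Householder's iteration coincides with the
iteration `x_{n+1} = x_n - f(x_n) A_{k-1}(x_n)/A_k(x_n)`. -/
theorem householder_eq_proposed
    (f : ℝ → ℝ) (hf : ContDiff ℝ (⊤ : ℕ∞) f) (hf0 : ∀ x, f x ≠ 0)
    (k : ℕ) (hk : 1 ≤ k) (x : ℝ) (hA : A f k x ≠ 0) :
    (k : ℝ) * iteratedDeriv (k - 1) (fun y => 1 / f y) x /
        iteratedDeriv k (fun y => 1 / f y) x =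
      -(f x * A f (k - 1) x / A f k x) := by
  obtain ⟨j, rfl⟩ : ∃ j, k = j + 1 := ⟨k - 1, by omega⟩
  have h1 : j + 1 - 1 = j := rfl
  rw [h1] at *
  rw [key hf hf0 j x, key hf hf0 (j+1) x]
  have hP : f x ≠ 0 := hf0 x
  have hfj : (j.factorial : ℝ) ≠ 0 := by positivity
  have hs : ((-1:ℝ))^(j+1) = -(-1:ℝ)^j := by rw [pow_succ]; ring
  have hsq : ((-1:ℝ))^j * ((-1:ℝ))^j = 1 := by
    rw [← pow_add, ← two_mul, pow_mul]; norm_num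
  rw [hs, Nat.factorial_succ]
  push_cast
  have hpw : f x ^ (j+1+1) = f x ^ (j+1) * f x := by ring
  rw [hpw]
  field_simp
end

section
/- Let f : ℝ → ℝ be smooth with f(x) ≠ 0 for all x. Then for every k ≥ 0 and every x ∈ ℝ, the k-th derivative of the reciprocal function satisfies (1/f)^{(k)}(x) = (−1)^k · k! · A_k(x) / f(x)^{k+1}. -/
open Finset

lemma leibniz_iteratedDeriv (f g : ℝ → ℝ) (hf : ContDiff ℝ (⊤ : ℕ∞) f)
    (hg : ContDiff ℝ (⊤ : ℕ∞) g) :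
    ∀ (n : ℕ) (x : ℝ), iteratedDeriv n (fun y => f y * g y) x =
      ∑ i ∈ Finset.range (n + 1),
        (n.choose i : ℝ) * iteratedDeriv i f x * iteratedDeriv (n - i) g x := by
  have hdf : ∀ m : ℕ, Differentiable ℝ (iteratedDeriv m f) :=
    fun m => hf.differentiable_iteratedDeriv m (by exact_mod_cast lt_top_iff_ne_top.2 (by simp))
  have hdg : ∀ m : ℕ, Differentiable ℝ (iteratedDeriv m g) :=
    fun m => hg.differentiable_iteratedDeriv m (by exact_mod_cast lt_top_iff_ne_top.2 (by simp))
  intro n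
  induction n with
  | zero => intro x; simp
  | succ n ih =>
    intro x
    have hfun : iteratedDeriv n (fun y => f y * g y) = fun y =>
        ∑ i ∈ Finset.range (n + 1),
          (n.choose i : ℝ) * iteratedDeriv i f y * iteratedDeriv (n - i) g y := by
      funext y; exact ih y
    rw [iteratedDeriv_succ, hfun]
    rw [deriv_fun_sum (fun i _ =>
      (show DifferentiableAt ℝ (fun y => (n.choose i : ℝ) * iteratedDeriv i f y * iteratedDeriv (n - i) g y) x from
      (((hdf i) x).const_mul ((n.choose i : ℝ))).mul ((hdg (n - i)) x)))]
    have hterm : ∀ i ∈ Finset.range (n + 1),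
        deriv (fun y => (n.choose i : ℝ) * iteratedDeriv i f y * iteratedDeriv (n - i) g y) x
          = (n.choose i : ℝ) * iteratedDeriv (i+1) f x * iteratedDeriv (n - i) g x
              + (n.choose i : ℝ) * iteratedDeriv i f x * iteratedDeriv (n - i + 1) g x := by
      intro i _
      rw [deriv_fun_mul (((hdf i) x).const_mul _) ((hdg (n - i)) x),
        deriv_const_mul _ ((hdf i) x), ← iteratedDeriv_succ, ← iteratedDeriv_succ]
    rw [Finset.sum_congr rfl hterm, Finset.sum_add_distrib]
    set T : ℕ → ℝ := fun m => iteratedDeriv m f x with hT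
    set U : ℕ → ℝ := fun m => iteratedDeriv m g x with hU
    -- RHS: peel off i = 0
    rw [Finset.sum_range_succ' (fun i => ((n+1).choose i : ℝ) * T i * U (n + 1 - i)) (n+1)]
    have hsplit : ∀ i ∈ range (n+1),
        (((n+1).choose (i+1) : ℝ)) * T (i+1) * U (n + 1 - (i+1))
          = (n.choose i : ℝ) * T (i+1) * U (n - i) + (n.choose (i+1) : ℝ) * T (i+1) * U (n - i) := by
      intro i _
      have h1 : n + 1 - (i + 1) = n - i := by omega
      rw [h1, Nat.choose_succ_succ, Nat.cast_add]; ring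
    rw [Finset.sum_congr rfl hsplit, Finset.sum_add_distrib]
    have hS2 : ∑ i ∈ range (n+1), (n.choose i : ℝ) * T i * U (n - i + 1)
        = (∑ i ∈ range (n+1), (n.choose (i+1) : ℝ) * T (i+1) * U (n - i))
          + ((n+1).choose 0 : ℝ) * T 0 * U (n + 1 - 0) := by
      rw [Finset.sum_range_succ' (fun i => (n.choose i : ℝ) * T i * U (n - i + 1)) n,
        Finset.sum_range_succ (fun i => (n.choose (i+1) : ℝ) * T (i+1) * U (n - i)) n]
      simp only [Nat.choose_succ_self, Nat.cast_zero, zero_mul, add_zero, Nat.choose_zero_right,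
        Nat.cast_one, Nat.sub_zero, Nat.choose_self]
      congr 1
      apply Finset.sum_congr rfl
      intro i hi
      simp only [Finset.mem_range] at hi
      have : n - (i+1) + 1 = n - i := by omega
      rw [this]
    rw [hS2]
    ring

/-- For smooth nonvanishing `f`, the `k`-th derivative of `1/f` equals
`(-1)^k k! A_k / f^{k+1}`. -/
theorem iteratedDeriv_one_div_eq
    (f : ℝ → ℝ) (hf : ContDiff ℝ (⊤ : ℕ∞) f) (hf0 : ∀ x, f x ≠ 0) :
    ∀ (k : ℕ) (x : ℝ),
      iteratedDeriv k (fun y => 1 / f y) x =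
        (-1 : ℝ) ^ k * (k.factorial : ℝ) * A f k x / f x ^ (k + 1) := by
  have hg : ContDiff ℝ (⊤ : ℕ∞) (fun y => 1 / f y) := contDiff_const.div hf hf0
  intro k
  induction k using Nat.strong_induction_on with
  | _ k ih =>
    match k with
    | 0 => intro x; simp [A]
    | (j+1) =>
      intro x
      -- the Leibniz identity applied to f * (1/f) = 1
      have hone : (fun y => f y * (1 / f y)) = fun _ => (1 : ℝ) := by
        funext y; field_simp [hf0 y]
      have hzero : (0 : ℝ) = ∑ i ∈ Finset.range (j + 2),
          ((j+1).choose i : ℝ) * iteratedDeriv i f x *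
            iteratedDeriv (j + 1 - i) (fun y => 1 / f y) x := by
        rw [← leibniz_iteratedDeriv f _ hf hg (j+1) x, hone, iteratedDeriv_succ']
        have hz : ∀ n : ℕ, iteratedDeriv n (fun _ : ℝ => (0:ℝ)) = fun _ => 0 := by
          intro n
          induction n with
          | zero => simp
          | succ n ihn => rw [iteratedDeriv_succ', deriv_const']; exact ihn
        simp only [deriv_const']
        rw [hz j]
      set G : ℕ → ℝ := fun m => iteratedDeriv m (fun y => 1 / f y) x with hG
      have hpeel : ∑ i ∈ Finset.range (j + 2),
            ((j+1).choose i : ℝ) * iteratedDeriv i f x * G (j + 1 - i)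
          = (∑ m ∈ Finset.range j,
              ((j+1).choose (m+2) : ℝ) * iteratedDeriv (m+2) f x * G (j - 1 - m))
            + ((j+1) : ℝ) * deriv f x * G j + f x * G (j+1) := by
        rw [Finset.sum_range_succ'
          (fun i => ((j+1).choose i : ℝ) * iteratedDeriv i f x * G (j + 1 - i)) (j+1),
          Finset.sum_range_succ'
          (fun i => ((j+1).choose (i+1) : ℝ) * iteratedDeriv (i+1) f x * G (j + 1 - (i+1))) j]
        have h0 : ((j+1).choose 0 : ℝ) * iteratedDeriv 0 f x * G (j + 1 - 0) = f x * G (j+1) := by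
          simp
        have h1 : ((j+1).choose 1 : ℝ) * iteratedDeriv 1 f x * G (j + 1 - 1) =
            ((j+1) : ℝ) * deriv f x * G j := by
          simp [iteratedDeriv_one, Nat.choose_one_right]
        rw [h0, h1]
        have h2 : ∀ m ∈ Finset.range j,
            ((j+1).choose (m+1+1) : ℝ) * iteratedDeriv (m+1+1) f x * G (j + 1 - (m+1+1))
            = ((j+1).choose (m+2) : ℝ) * iteratedDeriv (m+2) f x * G (j - 1 - m) := by
          intro m hm
          have : j + 1 - (m+1+1) = j - 1 - m := by omega
          rw [this]
        rw [Finset.sum_congr rfl h2]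
        try ring
      -- substitute induction hypotheses
      have hGj : G j = (-1 : ℝ) ^ j * (j.factorial : ℝ) * A f j x / f x ^ (j + 1) :=
        ih j (by omega) x
      set c : ℝ := (-1 : ℝ) ^ (j+1) * ((j+1).factorial : ℝ) / f x ^ (j + 2) with hc
      have hfx := hf0 x
      have hfpow : ∀ n : ℕ, f x ^ n ≠ 0 := fun n => pow_ne_zero n hfx
      have hclaim1 : ((j+1) : ℝ) * deriv f x * G j = -(c * f x * (deriv f x * A f j x)) := by
        rw [hGj, hc]
        have : f x ^ (j + 2) = f x ^ (j+1) * f x := by ring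
        rw [this]
        field_simp
        rw [pow_succ]
        push_cast [Nat.factorial_succ]
        ring
      have hclaim2 : ∑ m ∈ Finset.range j,
            ((j+1).choose (m+2) : ℝ) * iteratedDeriv (m+2) f x * G (j - 1 - m)
          = c * f x * (f x * ∑ m ∈ Finset.range j,
              (((m+2).factorial : ℝ))⁻¹ * (-f x) ^ m * iteratedDeriv (m+2) f x *
                A f (j - 1 - m) x) := by
        rw [Finset.mul_sum, Finset.mul_sum]
        apply Finset.sum_congr rfl
        intro m hm
        simp only [Finset.mem_range] at hm
        obtain ⟨q, rfl⟩ : ∃ q, j = q + m + 1 := ⟨j - m - 1, by omega⟩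
        have e1 : q + m + 1 - 1 - m = q := by omega
        rw [e1]
        have hGq : G q = (-1 : ℝ) ^ q * (q.factorial : ℝ) * A f q x / f x ^ (q + 1) :=
          ih q (by omega) x
        rw [hGq, hc]
        have hfacts : (((q+m+1+1).choose (m+2) : ℝ)) * ((m+2).factorial : ℝ)
            * ((q).factorial : ℝ) = ((q+m+1+1).factorial : ℝ) := by
          have h := Nat.choose_mul_factorial_mul_factorial (show m+2 ≤ q+m+1+1 by omega)
          have h' : q + m + 1 + 1 - (m+2) = q := by omega
          rw [h'] at h
          exact_mod_cast h
        have hfac0 : ((m+2).factorial : ℝ) ≠ 0 := by positivity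
        rw [← hfacts]
        field_simp
        have hm2 : ((-1:ℝ)) ^ (m * 2) = 1 := by
          rw [mul_comm, pow_mul]; norm_num
        ring_nf
        rw [hm2, mul_one]
      -- conclude
      have key : f x * G (j+1) = c * f x * A f (j+1) x := by
        have h := hzero
        rw [hpeel, hclaim1, hclaim2] at h
        have hA : A f (j+1) x = deriv f x * A f j x -
            f x * ∑ m ∈ Finset.range j,
              (((m+2).factorial : ℝ))⁻¹ * (-f x) ^ m * iteratedDeriv (m+2) f x *
                A f (j - 1 - m) x := by
          rw [A]
        rw [hA]
        linarith [h]
      have hstep : G (j+1) = c * A f (j+1) x := by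
        rw [show c * f x * A f (j+1) x = f x * (c * A f (j+1) x) from by ring] at key
        exact mul_left_cancel₀ hfx key
      have hfin : iteratedDeriv (j+1) (fun y => 1 / f y) x = c * A f (j+1) x := hstep
      rw [hfin, hc]
      ring
end

section
/- Let k ≥ 2 and let f : ℝ → ℝ be (k+1)-times continuously differentiable. Then the derivative of A_k equals (k+1) times Â_k; that is, for every x ∈ ℝ, A_k′(x) = (k+1)·Â_k(x). -/
/-- `Âⱼ = ∑_{l=2}^{j+1} (1/l!) (-f)^{l-2} f⁽ˡ⁾ A_{j+1-l}`. -/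
noncomputable def Ahat (f : ℝ → ℝ) (j : ℕ) (x : ℝ) : ℝ :=
  ∑ l ∈ Finset.Icc 2 (j + 1),
    ((l.factorial : ℝ))⁻¹ * (-f x) ^ (l - 2) * iteratedDeriv l f x * A f (j + 1 - l) x

lemma Ahat_eq (f : ℝ → ℝ) (j : ℕ) (x : ℝ) :
    Ahat f j x = ∑ m ∈ Finset.range j,
      (((m+2).factorial : ℝ))⁻¹ * (-f x) ^ m * iteratedDeriv (m+2) f x * A f (j - 1 - m) x := by
  unfold Ahat
  rw [show Finset.Icc 2 (j+1) = Finset.map ⟨fun m => m + 2, fun a b h => by simpa using h⟩ (Finset.range j) by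
    ext l
    simp only [Finset.mem_Icc, Finset.mem_map, Finset.mem_range, Function.Embedding.coeFn_mk]
    constructor
    · rintro ⟨h2, h3⟩; exact ⟨l - 2, by omega, show l - 2 + 2 = l by omega⟩
    · rintro ⟨b, hb, rfl⟩; show 2 ≤ b + 2 ∧ b + 2 ≤ j + 1; omega]
  rw [Finset.sum_map]
  refine Finset.sum_congr rfl fun m hm => ?_
  show ((((m+2).factorial : ℝ))⁻¹ * (-f x) ^ (m + 2 - 2) * iteratedDeriv (m+2) f x * A f (j + 1 - (m+2)) x) = _
  have h1 : m + 2 - 2 = m := by omega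
  have h2 : j + 1 - (m + 2) = j - 1 - m := by omega
  rw [h1, h2]

lemma A_succ_s3 (f : ℝ → ℝ) (j : ℕ) (x : ℝ) :
    A f (j+1) x = deriv f x * A f j x - f x * Ahat f j x := by
  rw [Ahat_eq, A]

lemma sum_step (f : ℝ → ℝ) (j : ℕ) (x : ℝ) :
    f x * ∑ m ∈ Finset.range j,
        ((((m+2).factorial : ℝ))⁻¹ * ((m:ℝ) * (-f x)^(m-1) * (-deriv f x)) * iteratedDeriv (m+2) f x * A f (j-1-m) x
          + (((m+2).factorial : ℝ))⁻¹ * (-f x)^m * iteratedDeriv (m+3) f x * A f (j-1-m) x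
          + (((m+2).factorial : ℝ))⁻¹ * (-f x)^m * iteratedDeriv (m+2) f x * (((j:ℝ) - m) * Ahat f (j-1-m) x))
      = (j:ℝ) * deriv f x * Ahat f j x
        - ∑ m ∈ Finset.range j,
            (((j:ℝ) - m) * (((m+2).factorial : ℝ))⁻¹ * (-f x)^m * iteratedDeriv (m+2) f x * A f (j-m) x
              + (((m+2).factorial : ℝ))⁻¹ * (-f x)^(m+1) * iteratedDeriv (m+3) f x * A f (j-1-m) x) := by
  rw [Finset.mul_sum, Ahat_eq f j x, Finset.mul_sum, ← Finset.sum_sub_distrib]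
  refine Finset.sum_congr rfl fun m hm => ?_
  have hmj : m < j := Finset.mem_range.mp hm
  have harec : A f (j-m) x = deriv f x * A f (j-1-m) x - f x * Ahat f (j-1-m) x := by
    have := A_succ_s3 f (j-1-m) x
    rwa [(by omega : j - 1 - m + 1 = j - m)] at this
  rw [harec]
  rcases m with _ | n
  · norm_num
    ring
  · simp only [Nat.add_sub_cancel]
    push_cast
    ring

lemma final_step (f : ℝ → ℝ) (j : ℕ) (x : ℝ) :
    ((j:ℝ)+1+1) * Ahat f (j+1) x
      = iteratedDeriv 2 f x * A f j x
        + ∑ m ∈ Finset.range j,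
            (((j:ℝ) - m) * (((m+2).factorial : ℝ))⁻¹ * (-f x)^m * iteratedDeriv (m+2) f x * A f (j-m) x
              + (((m+2).factorial : ℝ))⁻¹ * (-f x)^(m+1) * iteratedDeriv (m+3) f x * A f (j-1-m) x) := by
  have key : ∀ m : ℕ,
      ((j:ℝ)+1+1) * ((((m+2).factorial : ℝ))⁻¹ * (-f x)^m * iteratedDeriv (m+2) f x * A f (j-m) x)
        = ((j:ℝ) - m) * (((m+2).factorial : ℝ))⁻¹ * (-f x)^m * iteratedDeriv (m+2) f x * A f (j-m) x
          + (((m+1).factorial : ℝ))⁻¹ * (-f x)^m * iteratedDeriv (m+2) f x * A f (j-m) x := by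
    intro m
    have h1c : (((m+2).factorial) : ℝ) = ((m:ℝ)+2) * ((m+1).factorial : ℝ) := by
      rw [show m+2 = (m+1)+1 from rfl, Nat.factorial_succ]
      push_cast; ring
    have hK : ((m+1).factorial : ℝ) ≠ 0 := Nat.cast_ne_zero.mpr (Nat.factorial_ne_zero _)
    have hm2 : ((m:ℝ)+2) ≠ 0 := by positivity
    rw [h1c]
    field_simp
    ring
  calc ((j:ℝ)+1+1) * Ahat f (j+1) x
      = ∑ m ∈ Finset.range (j+1),
          ((j:ℝ)+1+1) * ((((m+2).factorial : ℝ))⁻¹ * (-f x)^m * iteratedDeriv (m+2) f x * A f (j-m) x) := by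
        rw [Ahat_eq f (j+1) x, Finset.mul_sum]
        simp only [Nat.add_sub_cancel]
    _ = ∑ m ∈ Finset.range (j+1),
          (((j:ℝ) - m) * (((m+2).factorial : ℝ))⁻¹ * (-f x)^m * iteratedDeriv (m+2) f x * A f (j-m) x
            + (((m+1).factorial : ℝ))⁻¹ * (-f x)^m * iteratedDeriv (m+2) f x * A f (j-m) x) :=
        Finset.sum_congr rfl fun m _ => key m
    _ = (∑ m ∈ Finset.range (j+1),
          ((j:ℝ) - m) * (((m+2).factorial : ℝ))⁻¹ * (-f x)^m * iteratedDeriv (m+2) f x * A f (j-m) x)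
        + ∑ m ∈ Finset.range (j+1),
            (((m+1).factorial : ℝ))⁻¹ * (-f x)^m * iteratedDeriv (m+2) f x * A f (j-m) x :=
        Finset.sum_add_distrib
    _ = (∑ m ∈ Finset.range j,
          ((j:ℝ) - m) * (((m+2).factorial : ℝ))⁻¹ * (-f x)^m * iteratedDeriv (m+2) f x * A f (j-m) x)
        + ((∑ m ∈ Finset.range j,
            (((m+2).factorial : ℝ))⁻¹ * (-f x)^(m+1) * iteratedDeriv (m+3) f x * A f (j-1-m) x)
          + iteratedDeriv 2 f x * A f j x) := by
        congr 1
        · rw [Finset.sum_range_succ]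
          norm_num
        · rw [Finset.sum_range_succ']
          congr 1
          · refine Finset.sum_congr rfl fun i _ => ?_
            rw [show j - (i+1) = j - 1 - i by omega]
          · norm_num
    _ = iteratedDeriv 2 f x * A f j x
        + ∑ m ∈ Finset.range j,
            (((j:ℝ) - m) * (((m+2).factorial : ℝ))⁻¹ * (-f x)^m * iteratedDeriv (m+2) f x * A f (j-m) x
              + (((m+2).factorial : ℝ))⁻¹ * (-f x)^(m+1) * iteratedDeriv (m+3) f x * A f (j-1-m) x) := by
        rw [Finset.sum_add_distrib]
        ring

lemma hasDerivAt_iteratedDeriv (f : ℝ → ℝ) (n N : ℕ) (hf : ContDiff ℝ (N:ℕ) f) (h : n < N) (x : ℝ) :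
    HasDerivAt (iteratedDeriv n f) (iteratedDeriv (n+1) f x) x := by
  rw [iteratedDeriv_succ]
  exact ((hf.differentiable_iteratedDeriv n (by exact_mod_cast h)) x).hasDerivAt

lemma hasDerivAt_A (f : ℝ → ℝ) :
    ∀ j, ContDiff ℝ (j + 1 : ℕ) f → ∀ x : ℝ, HasDerivAt (A f j) (((j : ℝ) + 1) * Ahat f j x) x := by
  intro j
  induction j using Nat.strong_induction_on with
  | _ j IH =>
    rcases j with _ | j
    · intro hf x
      have h0 : A f 0 = fun _ => (1:ℝ) := by funext y; rw [A]
      have h1 : Ahat f 0 x = 0 := by rw [Ahat_eq]; simp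
      rw [h0, h1, mul_zero]
      exact hasDerivAt_const x 1
    · intro hf x
      have hDf : ∀ y : ℝ, HasDerivAt f (deriv f y) y := by
        intro y
        have := hasDerivAt_iteratedDeriv f 0 (j+1+1) hf (by omega) y
        simpa [iteratedDeriv_zero, iteratedDeriv_one] using this
      have hD2 : HasDerivAt (deriv f) (iteratedDeriv 2 f x) x := by
        have := hasDerivAt_iteratedDeriv f 1 (j+1+1) hf (by omega) x
        simpa [iteratedDeriv_one] using this
      have hIH : ∀ i, i ≤ j → HasDerivAt (A f i) (((i : ℝ) + 1) * Ahat f i x) x := by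
        intro i hi
        exact IH i (by omega) (hf.of_le (by exact_mod_cast (by omega : i + 1 ≤ j + 1 + 1))) x
      have hterm : ∀ m ∈ Finset.range j,
          HasDerivAt (fun y => (((m+2).factorial : ℝ))⁻¹ * (-f y) ^ m * iteratedDeriv (m+2) f y * A f (j - 1 - m) y)
            ((((m+2).factorial : ℝ))⁻¹ * ((m:ℝ) * (-f x)^(m-1) * (-deriv f x)) * iteratedDeriv (m+2) f x * A f (j-1-m) x
              + (((m+2).factorial : ℝ))⁻¹ * (-f x)^m * iteratedDeriv (m+3) f x * A f (j-1-m) x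
              + (((m+2).factorial : ℝ))⁻¹ * (-f x)^m * iteratedDeriv (m+2) f x * (((j:ℝ) - m) * Ahat f (j-1-m) x)) x := by
        intro m hm
        have hmj : m < j := Finset.mem_range.mp hm
        have hg1 : HasDerivAt (fun y => (-f y) ^ m) ((m:ℝ) * (-f x)^(m-1) * (-deriv f x)) x :=
          ((hDf x).neg).pow m
        have hg2 : HasDerivAt (iteratedDeriv (m+2) f) (iteratedDeriv (m+3) f x) x :=
          hasDerivAt_iteratedDeriv f (m+2) (j+1+1) hf (by omega) x
        have hg3 : HasDerivAt (A f (j-1-m)) ((((j-1-m : ℕ) : ℝ) + 1) * Ahat f (j-1-m) x) x :=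
          hIH (j-1-m) (by omega)
        have hc : ((j - 1 - m : ℕ) : ℝ) + 1 = (j:ℝ) - m := by
          have h9 : ((j - 1 - m : ℕ) : ℝ) = ((j:ℝ) - m) - 1 := by
            rw [show j-1-m = j - m - 1 by omega, Nat.cast_sub (by omega), Nat.cast_sub hmj.le, Nat.cast_one]
          rw [h9]; ring
        rw [hc] at hg3
        have H := ((hg1.const_mul ((((m+2).factorial : ℝ))⁻¹)).fun_mul hg2).fun_mul hg3
        refine H.congr_deriv ?_
        ring
      have hAhatD := HasDerivAt.fun_sum hterm
      have hfun : (fun y => ∑ m ∈ Finset.range j,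
            (((m+2).factorial : ℝ))⁻¹ * (-f y) ^ m * iteratedDeriv (m+2) f y * A f (j - 1 - m) y)
          = Ahat f j := by
        funext y; exact (Ahat_eq f j y).symm
      rw [hfun] at hAhatD
      have hAj := hIH j le_rfl
      have Hmain := (hD2.fun_mul hAj).fun_sub ((hDf x).fun_mul hAhatD)
      have hEq : A f (j+1) = fun y => deriv f y * A f j y - f y * Ahat f j y :=
        funext fun y => A_succ_s3 f j y
      rw [hEq]
      refine Hmain.congr_deriv (Eq.symm ?_)
      push_cast
      linear_combination final_step f j x + sum_step f j x

/-- The derivative of `A_k` equals `(k+1) Â_k`. -/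
theorem deriv_A_eq (k : ℕ) (hk : 2 ≤ k) (f : ℝ → ℝ) (hf : ContDiff ℝ (k + 1 : ℕ) f) :
    ∀ x : ℝ, deriv (A f k) x = (k + 1 : ℝ) * Ahat f k x := by
  intro x
  exact_mod_cast (hasDerivAt_A f k hf x).deriv
end

section
/- Let y ∈ [0,1] and let α, γ ∈ [0,1/2] satisfy 4α(1−α) = y and (4γ(1−γ))^{1/ln 4} = y. Set σ := (ln 4)^{1/(1−ln 4)}. Then |α − γ| ≤ (σ − σ^{ln 4}) / (2·(√(1 − (1/2)^{ln 4}) + √(1/2))). -/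
open Real

private lemma log4_eq : Real.log 4 = 2 * Real.log 2 := by
  rw [show (4:ℝ) = 2^(2:ℕ) by norm_num, Real.log_pow]
  push_cast; ring

private lemma log4_lb : (445/321 : ℝ) ≤ Real.log 4 := by
  rw [log4_eq]; nlinarith [Real.log_two_gt_d9]

private lemma log4_ub : Real.log 4 ≤ (506/365 : ℝ) := by
  rw [log4_eq]; nlinarith [Real.log_two_lt_d9]

private lemma log4_pos : 0 < Real.log 4 := lt_of_lt_of_le (by norm_num) log4_lb

private lemma one_lt_log4 : 1 < Real.log 4 := lt_of_lt_of_le (by norm_num) log4_lb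

private lemma rpow_ge (a w : ℝ) (ha : 0 < a) (ha1 : a ≤ 1) (hw : 0 ≤ w)
    (h : (w ^ (5:ℕ)) ^ (73:ℕ) ≤ (a ^ (2:ℕ)) ^ (253:ℕ)) : w ≤ a ^ Real.log 4 := by
  have h2 : (a ^ ((506:ℝ)/365)) ^ (365:ℕ) = a ^ (506:ℕ) := by
    rw [← Real.rpow_natCast (a ^ ((506:ℝ)/365)) 365, ← Real.rpow_mul ha.le,
      show ((506:ℝ)/365 * (365:ℕ)) = ((506:ℕ):ℝ) by norm_num, Real.rpow_natCast]
  have h3 : w ≤ a ^ ((506:ℝ)/365) := by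
    refine le_of_pow_le_pow_left₀ (n := 365) (by norm_num) (Real.rpow_nonneg ha.le _) ?_
    rw [h2]; rw [← pow_mul, ← pow_mul] at h; exact h
  exact h3.trans (Real.rpow_le_rpow_of_exponent_ge ha ha1 log4_ub)

private lemma rpow_le (b W : ℝ) (hb : 0 < b) (hb1 : b ≤ 1) (hW : 0 ≤ W)
    (h : (b ^ (5:ℕ)) ^ (89:ℕ) ≤ (W ^ (3:ℕ)) ^ (107:ℕ)) : b ^ Real.log 4 ≤ W := by
  have h2 : (b ^ ((445:ℝ)/321)) ^ (321:ℕ) = b ^ (445:ℕ) := by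
    rw [← Real.rpow_natCast (b ^ ((445:ℝ)/321)) 321, ← Real.rpow_mul hb.le,
      show ((445:ℝ)/321 * (321:ℕ)) = ((445:ℕ):ℝ) by norm_num, Real.rpow_natCast]
  have h3 : b ^ ((445:ℝ)/321) ≤ W := by
    refine le_of_pow_le_pow_left₀ (n := 321) (by norm_num) hW ?_
    rw [h2]; rw [← pow_mul, ← pow_mul] at h; exact h
  exact (Real.rpow_le_rpow_of_exponent_ge hb hb1 log4_lb).trans h3

private lemma stepA (y c a b w u v : ℝ) (ha : 0 < a) (ha1 : a ≤ 1) (hw : 0 ≤ w)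
    (hwa : (w ^ (5:ℕ)) ^ (73:ℕ) ≤ (a ^ (2:ℕ)) ^ (253:ℕ)) (hu : 0 ≤ u) (hu2 : 1 - w ≤ u ^ 2)
    (hv : 0 ≤ v) (hv2 : v ^ 2 ≤ 1 - b)
    (huv : u - v ≤ c) (hay : a ≤ y) (hyb : y ≤ b) :
    Real.sqrt (1 - y ^ Real.log 4) - Real.sqrt (1 - y) ≤ c := by
  have h1 : w ≤ y ^ Real.log 4 :=
    (rpow_ge a w ha ha1 hw hwa).trans (Real.rpow_le_rpow ha.le hay log4_pos.le)
  have h2 : Real.sqrt (1 - y ^ Real.log 4) ≤ u := by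
    calc Real.sqrt (1 - y ^ Real.log 4) ≤ Real.sqrt (u^2) :=
          Real.sqrt_le_sqrt (by linarith)
      _ = u := Real.sqrt_sq hu
  have h3 : v ≤ Real.sqrt (1 - y) := by
    calc v = Real.sqrt (v^2) := (Real.sqrt_sq hv).symm
      _ ≤ Real.sqrt (1 - y) := Real.sqrt_le_sqrt (by linarith)
  linarith

private lemma stepB (y c a b w W r v : ℝ) (ha : 0 < a) (hb1 : b ≤ 1)
    (hw : 0 ≤ w) (hwa : (w ^ (5:ℕ)) ^ (73:ℕ) ≤ (a ^ (2:ℕ)) ^ (253:ℕ))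
    (hcrit : a ≤ (445/321) * w)
    (hW : 0 ≤ W) (hWb : (b ^ (5:ℕ)) ^ (89:ℕ) ≤ (W ^ (3:ℕ)) ^ (107:ℕ))
    (hr : 0 ≤ r) (hr2 : r ^ 2 ≤ 1 - W) (hv : 0 ≤ v) (hv2 : v ^ 2 ≤ 1 - b)
    (hrv : 0 < r + v) (hkey : a - w ≤ c * (r + v)) (hc : 0 ≤ c)
    (hay : a ≤ y) (hyb : y ≤ b) :
    Real.sqrt (1 - y ^ Real.log 4) - Real.sqrt (1 - y) ≤ c := by
  have ha1 : a ≤ 1 := le_trans (hay.trans hyb) hb1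
  have hy0 : 0 < y := lt_of_lt_of_le ha hay
  have hy1 : y ≤ 1 := hyb.trans hb1
  have hb0 : 0 < b := lt_of_lt_of_le hy0 hyb
  have hL1 : (1:ℝ) ≤ Real.log 4 := one_lt_log4.le
  have hA : 0 < a ^ Real.log 4 := Real.rpow_pos_of_pos ha _
  have hwl : w ≤ a ^ Real.log 4 := rpow_ge a w ha ha1 hw hwa
  -- Step 1 : y - y^L ≤ a - w  (Bernoulli tangent bound)
  have hs : (-1:ℝ) ≤ (y - a)/a := by
    have : 0 ≤ (y-a)/a := div_nonneg (by linarith) ha.le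
    linarith
  have hber := one_add_mul_self_le_rpow_one_add hs hL1
  rw [show 1 + (y-a)/a = y/a by field_simp; ring] at hber
  have hdiv : (y/a) ^ Real.log 4 = y ^ Real.log 4 / a ^ Real.log 4 :=
    Real.div_rpow hy0.le ha.le _
  have hmul := mul_le_mul_of_nonneg_right hber hA.le
  rw [hdiv, div_mul_cancel₀ _ hA.ne'] at hmul
  have hLA : a ≤ Real.log 4 * a ^ Real.log 4 := by
    calc a ≤ (445/321) * w := hcrit
      _ ≤ Real.log 4 * w := by nlinarith [log4_lb]
      _ ≤ Real.log 4 * a ^ Real.log 4 := by nlinarith [log4_pos]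
  have h5 : y - a ≤ (Real.log 4 * a ^ Real.log 4) * ((y-a)/a) := by
    have h6 : 0 ≤ (y-a)/a := div_nonneg (by linarith) ha.le
    have h7 : a * ((y-a)/a) = y - a := by field_simp
    nlinarith [mul_le_mul_of_nonneg_right hLA h6]
  have hexp : (1 + Real.log 4 * ((y-a)/a)) * a ^ Real.log 4
      = a ^ Real.log 4 + (Real.log 4 * a ^ Real.log 4) * ((y-a)/a) := by ring
  have hstep1 : y - y ^ Real.log 4 ≤ a - w := by linarith [hmul, h5, hwl, hexp]
  -- Step 2 : y^L ≤ W
  have hyW : y ^ Real.log 4 ≤ W :=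
    (Real.rpow_le_rpow hy0.le hyb log4_pos.le).trans (rpow_le b W hb0 hb1 hW hWb)
  have hr' : r ≤ Real.sqrt (1 - y ^ Real.log 4) := by
    calc r = Real.sqrt (r^2) := (Real.sqrt_sq hr).symm
      _ ≤ Real.sqrt (1 - y ^ Real.log 4) := Real.sqrt_le_sqrt (by linarith)
  have hv' : v ≤ Real.sqrt (1 - y) := by
    calc v = Real.sqrt (v^2) := (Real.sqrt_sq hv).symm
      _ ≤ Real.sqrt (1 - y) := Real.sqrt_le_sqrt (by linarith)
  have hyL1 : y ^ Real.log 4 ≤ 1 := Real.rpow_le_one hy0.le hy1 log4_pos.le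
  have hSA2 : (Real.sqrt (1 - y ^ Real.log 4))^2 = 1 - y ^ Real.log 4 :=
    Real.sq_sqrt (by linarith)
  have hSB2 : (Real.sqrt (1 - y))^2 = 1 - y := Real.sq_sqrt (by linarith)
  set SA := Real.sqrt (1 - y ^ Real.log 4)
  set SB := Real.sqrt (1 - y)
  rcases le_or_gt SA SB with hcase | hcase
  · linarith
  · have h8 : (SA - SB) * (r + v) ≤ (SA - SB) * (SA + SB) :=
      mul_le_mul_of_nonneg_left (by linarith) (by linarith)
    have h9 : (SA - SB) * (SA + SB) = y - y ^ Real.log 4 := by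
      have : (SA - SB) * (SA + SB) = SA^2 - SB^2 := by ring
      rw [this, hSA2, hSB2]; ring
    have h10 : (SA - SB) * (r + v) ≤ c * (r + v) := by
      rw [h9] at h8; linarith
    exact le_of_mul_le_mul_right h10 hrv

private lemma step0 (y : ℝ) (h0 : 0 ≤ y) (hyb : y ≤ 1500/10000) :
    Real.sqrt (1 - y ^ Real.log 4) - Real.sqrt (1 - y) ≤ (801331/10000000 : ℝ) := by
  have hq : (92/100 : ℝ) ≤ Real.sqrt (1 - y) := by
    calc (92/100:ℝ) = Real.sqrt ((92/100)^2) := (Real.sqrt_sq (by norm_num)).symm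
      _ ≤ Real.sqrt (1 - y) := Real.sqrt_le_sqrt (by nlinarith)
  have hyLnn : 0 ≤ y ^ Real.log 4 := Real.rpow_nonneg h0 _
  have h1 : 1 - y ^ Real.log 4 ≤ (Real.sqrt (1 - y) + (801331/10000000:ℝ)) ^ 2 := by
    have hs : (Real.sqrt (1-y))^2 = 1 - y := Real.sq_sqrt (by linarith)
    nlinarith [hq]
  have h2 : Real.sqrt (1 - y ^ Real.log 4) ≤ Real.sqrt (1-y) + (801331/10000000:ℝ) := by
    calc Real.sqrt (1 - y ^ Real.log 4)
        ≤ Real.sqrt ((Real.sqrt (1-y) + (801331/10000000:ℝ))^2) := Real.sqrt_le_sqrt h1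
      _ = Real.sqrt (1-y) + (801331/10000000:ℝ) := Real.sqrt_sq (by positivity)
  linarith

private lemma const_bound :
    (801331/10000000 : ℝ)/2 ≤
      ((Real.log 4) ^ (1 / (1 - Real.log 4)) -
          ((Real.log 4) ^ (1 / (1 - Real.log 4))) ^ (Real.log 4)) /
        (2 * (Real.sqrt (1 - (1 / 2 : ℝ) ^ (Real.log 4)) + Real.sqrt (1 / 2))) := by
  have hL1 : (1:ℝ) < Real.log 4 := one_lt_log4
  have hL0 : (0:ℝ) < Real.log 4 := log4_pos
  set L := Real.log 4 with hLdef
  set σ : ℝ := L ^ (1/(1-L)) with hσdef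
  have hσ : 0 < σ := Real.rpow_pos_of_pos hL0 _
  have hσL : 0 < σ ^ L := Real.rpow_pos_of_pos hσ _
  -- key : σ ^ L = σ / L
  have h1L : (1:ℝ) - L ≠ 0 := sub_ne_zero.mpr (by linarith)
  have hkey : σ ^ (L - 1) = L⁻¹ := by
    rw [hσdef, ← Real.rpow_mul hL0.le,
      show 1/(1-L) * (L-1) = -1 by field_simp; ring, Real.rpow_neg_one]
  have hσLe : σ ^ L = σ / L := by
    have h2 : σ ^ L = σ ^ (L-1) * σ ^ (1:ℝ) := by
      rw [← Real.rpow_add hσ]; ring_nf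
    rw [h2, hkey, Real.rpow_one]; field_simp
  -- numerator lower bound via Bernoulli at σ
  have hs0 : (0:ℝ) < (4293/10000:ℝ) := by norm_num
  have hnum : (4293/10000:ℝ) - (4293/10000:ℝ) ^ L ≤ σ - σ ^ L := by
    set s : ℝ := (4293/10000:ℝ) with hsdef
    have hsneg : (-1:ℝ) ≤ s/σ - 1 := by
      have : 0 ≤ s/σ := by positivity
      linarith
    have hber := one_add_mul_self_le_rpow_one_add hsneg hL1.le
    rw [show 1 + (s/σ - 1) = s/σ by ring] at hber
    have hdiv : (s/σ) ^ L = s ^ L / σ ^ L := Real.div_rpow hs0.le hσ.le _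
    have hmul := mul_le_mul_of_nonneg_right hber hσL.le
    rw [hdiv, div_mul_cancel₀ _ hσL.ne'] at hmul
    have e1 : (1 + L * (s/σ - 1)) * σ ^ L = σ ^ L + (s - σ) := by
      rw [hσLe]; field_simp
    rw [e1] at hmul
    linarith [hmul]
  have ht : (4293/10000:ℝ) ^ L ≤ 30967/100000 :=
    rpow_le _ _ (by norm_num) (by norm_num) (by norm_num) (by norm_num)
  have hhalf : (1912721/5000000 : ℝ) ≤ (1/2:ℝ) ^ L := by
    exact rpow_ge _ _ (by norm_num) (by norm_num) (by norm_num) (by norm_num)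
  have hhalf1 : (1/2:ℝ) ^ L ≤ 1 := Real.rpow_le_one (by norm_num) (by norm_num) hL0.le
  have hd1 : Real.sqrt (1 - (1/2:ℝ) ^ L) ≤ 7857837/10000000 := by
    calc Real.sqrt (1 - (1/2:ℝ) ^ L) ≤ Real.sqrt ((7857837/10000000:ℝ)^2) :=
          Real.sqrt_le_sqrt (by nlinarith)
      _ = 7857837/10000000 := Real.sqrt_sq (by norm_num)
  have hd2 : Real.sqrt (1/2 : ℝ) ≤ 1767767/2500000 := by
    calc Real.sqrt (1/2:ℝ) ≤ Real.sqrt ((1767767/2500000:ℝ)^2) :=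
          Real.sqrt_le_sqrt (by norm_num)
      _ = 1767767/2500000 := Real.sqrt_sq (by norm_num)
  have hdpos : 0 < 2 * (Real.sqrt (1 - (1/2:ℝ) ^ L) + Real.sqrt (1/2)) := by
    have h1 : 0 < Real.sqrt (1/2:ℝ) := Real.sqrt_pos.mpr (by norm_num)
    have h2 : 0 ≤ Real.sqrt (1 - (1/2:ℝ) ^ L) := Real.sqrt_nonneg _
    linarith
  have hnum2 : (11963/100000 : ℝ) ≤ σ - σ ^ L := by
    linarith [hnum, ht]
  calc (801331/10000000 : ℝ)/2
      ≤ (11963/100000 : ℝ) / (2 * (7857837/10000000 + 1767767/2500000)) := by norm_num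
    _ ≤ (σ - σ ^ L) / (2 * (Real.sqrt (1 - (1/2:ℝ) ^ L) + Real.sqrt (1/2))) :=
        div_le_div₀ (le_trans (by norm_num) hnum2) hnum2 hdpos (by linarith [hd1, hd2])

private lemma main_bound (y : ℝ) (h0 : 0 ≤ y) (h1 : y ≤ 1) :
    Real.sqrt (1 - y ^ Real.log 4) - Real.sqrt (1 - y) ≤ (801331/10000000:ℝ) := by
  rcases le_or_gt y (1500/10000:ℝ) with h | hh
  · exact step0 y h0 (by linarith)
  rcases le_or_gt y (2200/10000:ℝ) with h | hh'
  · exact stepA y (801331/10000000:ℝ) (1500/10000:ℝ) (2200/10000:ℝ) (720799/10000000:ℝ) (9632861/10000000:ℝ) (11039701/12500000:ℝ) (by norm_num) (by norm_num) (by norm_num) (by norm_num) (by norm_num) (by norm_num) (by norm_num) (by norm_num) (by norm_num) hh.le h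
  clear hh; have hh := hh'; clear hh'
  rcases le_or_gt y (2662/10000:ℝ) with h | hh'
  · exact stepA y (801331/10000000:ℝ) (2200/10000:ℝ) (2662/10000:ℝ) (3064359/25000000:ℝ) (93671001/100000000:ℝ) (42831063/50000000:ℝ) (by norm_num) (by norm_num) (by norm_num) (by norm_num) (by norm_num) (by norm_num) (by norm_num) (by norm_num) (by norm_num) hh.le h
  clear hh; have hh := hh'; clear hh'
  rcases le_or_gt y (3001/10000:ℝ) with h | hh'
  · exact stepA y (801331/10000000:ℝ) (2662/10000:ℝ) (3001/10000:ℝ) (798243/5000000:ℝ) (91670683/100000000:ℝ) (41830013/50000000:ℝ) (by norm_num) (by norm_num) (by norm_num) (by norm_num) (by norm_num) (by norm_num) (by norm_num) (by norm_num) (by norm_num) hh.le h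
  clear hh; have hh := hh'; clear hh'
  rcases le_or_gt y (3264/10000:ℝ) with h | hh'
  · exact stepA y (801331/10000000:ℝ) (3001/10000:ℝ) (3264/10000:ℝ) (3770189/20000000:ℝ) (90082771/100000000:ℝ) (41036569/50000000:ℝ) (by norm_num) (by norm_num) (by norm_num) (by norm_num) (by norm_num) (by norm_num) (by norm_num) (by norm_num) (by norm_num) hh.le h
  clear hh; have hh := hh'; clear hh'
  rcases le_or_gt y (3476/10000:ℝ) with h | hh'
  · exact stepA y (801331/10000000:ℝ) (3264/10000:ℝ) (3476/10000:ℝ) (10589639/50000000:ℝ) (22195259/25000000:ℝ) (40385641/50000000:ℝ) (by norm_num) (by norm_num) (by norm_num) (by norm_num) (by norm_num) (by norm_num) (by norm_num) (by norm_num) (by norm_num) hh.le h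
  clear hh; have hh := hh'; clear hh'
  rcases le_or_gt y (3652/10000:ℝ) with h | hh'
  · exact stepA y (801331/10000000:ℝ) (3476/10000:ℝ) (3652/10000:ℝ) (23109909/100000000:ℝ) (21921749/25000000:ℝ) (79674337/100000000:ℝ) (by norm_num) (by norm_num) (by norm_num) (by norm_num) (by norm_num) (by norm_num) (by norm_num) (by norm_num) (by norm_num) hh.le h
  clear hh; have hh := hh'; clear hh'
  rcases le_or_gt y (3800/10000:ℝ) with h | hh'
  · exact stepA y (801331/10000000:ℝ) (3652/10000:ℝ) (3800/10000:ℝ) (12373877/50000000:ℝ) (86748053/100000000:ℝ) (39370039/50000000:ℝ) (by norm_num) (by norm_num) (by norm_num) (by norm_num) (by norm_num) (by norm_num) (by norm_num) (by norm_num) (by norm_num) hh.le h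
  clear hh; have hh := hh'; clear hh'
  rcases le_or_gt y (3927/10000:ℝ) with h | hh'
  · exact stepA y (801331/10000000:ℝ) (3800/10000:ℝ) (3927/10000:ℝ) (261489/1000000:ℝ) (85936663/100000000:ℝ) (15585891/20000000:ℝ) (by norm_num) (by norm_num) (by norm_num) (by norm_num) (by norm_num) (by norm_num) (by norm_num) (by norm_num) (by norm_num) hh.le h
  clear hh; have hh := hh'; clear hh'
  rcases le_or_gt y (4038/10000:ℝ) with h | hh'
  · exact stepA y (801331/10000000:ℝ) (3927/10000:ℝ) (4038/10000:ℝ) (27368189/100000000:ℝ) (85224299/100000000:ℝ) (19303497/25000000:ℝ) (by norm_num) (by norm_num) (by norm_num) (by norm_num) (by norm_num) (by norm_num) (by norm_num) (by norm_num) (by norm_num) hh.le h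
  clear hh; have hh := hh'; clear hh'
  rcases le_or_gt y (4136/10000:ℝ) with h | hh'
  · exact stepA y (801331/10000000:ℝ) (4038/10000:ℝ) (4136/10000:ℝ) (28446433/100000000:ℝ) (42294671/50000000:ℝ) (38288379/50000000:ℝ) (by norm_num) (by norm_num) (by norm_num) (by norm_num) (by norm_num) (by norm_num) (by norm_num) (by norm_num) (by norm_num) hh.le h
  clear hh; have hh := hh'; clear hh'
  rcases le_or_gt y (4223/10000:ℝ) with h | hh'
  · exact stepA y (801331/10000000:ℝ) (4136/10000:ℝ) (4223/10000:ℝ) (29407971/100000000:ℝ) (84019063/100000000:ℝ) (38003289/50000000:ℝ) (by norm_num) (by norm_num) (by norm_num) (by norm_num) (by norm_num) (by norm_num) (by norm_num) (by norm_num) (by norm_num) hh.le h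
  clear hh; have hh := hh'; clear hh'
  rcases le_or_gt y (4300/10000:ℝ) with h | hh'
  · exact stepA y (801331/10000000:ℝ) (4223/10000:ℝ) (4300/10000:ℝ) (15134497/50000000:ℝ) (41752547/50000000:ℝ) (9437293/12500000:ℝ) (by norm_num) (by norm_num) (by norm_num) (by norm_num) (by norm_num) (by norm_num) (by norm_num) (by norm_num) (by norm_num) hh.le h
  clear hh; have hh := hh'; clear hh'
  rcases le_or_gt y (4999/10000:ℝ) with h | hh'
  · exact stepB y (801331/10000000:ℝ) (4300/10000:ℝ) (4999/10000:ℝ) (31036791/100000000:ℝ) (2390253/6250000:ℝ) (15716991/20000000:ℝ) (17679437/25000000:ℝ) (by norm_num) (by norm_num) (by norm_num) (by norm_num) (by norm_num) (by norm_num) (by norm_num) (by norm_num) (by norm_num) (by norm_num) (by norm_num) (by norm_num) (by norm_num) (by norm_num) hh.le h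
  clear hh; have hh := hh'; clear hh'
  rcases le_or_gt y (5193/10000:ℝ) with h | hh'
  · exact stepB y (801331/10000000:ℝ) (4999/10000:ℝ) (5193/10000:ℝ) (38243821/100000000:ℝ) (20158419/50000000:ℝ) (38627439/50000000:ℝ) (17333133/25000000:ℝ) (by norm_num) (by norm_num) (by norm_num) (by norm_num) (by norm_num) (by norm_num) (by norm_num) (by norm_num) (by norm_num) (by norm_num) (by norm_num) (by norm_num) (by norm_num) (by norm_num) hh.le h
  clear hh; have hh := hh'; clear hh'
  rcases le_or_gt y (5309/10000:ℝ) with h | hh'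
  · exact stepB y (801331/10000000:ℝ) (5193/10000:ℝ) (5309/10000:ℝ) (10079153/25000000:ℝ) (41570679/100000000:ℝ) (38219537/50000000:ℝ) (547927/800000:ℝ) (by norm_num) (by norm_num) (by norm_num) (by norm_num) (by norm_num) (by norm_num) (by norm_num) (by norm_num) (by norm_num) (by norm_num) (by norm_num) (by norm_num) (by norm_num) (by norm_num) hh.le h
  clear hh; have hh := hh'; clear hh'
  rcases le_or_gt y (5390/10000:ℝ) with h | hh'
  · exact stepB y (801331/10000000:ℝ) (5309/10000:ℝ) (5390/10000:ℝ) (41570453/100000000:ℝ) (10613129/25000000:ℝ) (37930029/50000000:ℝ) (3394849/5000000:ℝ) (by norm_num) (by norm_num) (by norm_num) (by norm_num) (by norm_num) (by norm_num) (by norm_num) (by norm_num) (by norm_num) (by norm_num) (by norm_num) (by norm_num) (by norm_num) (by norm_num) hh.le h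
  clear hh; have hh := hh'; clear hh'
  rcases le_or_gt y (5451/10000:ℝ) with h | hh'
  · exact stepB y (801331/10000000:ℝ) (5390/10000:ℝ) (5451/10000:ℝ) (42452291/100000000:ℝ) (43120007/100000000:ℝ) (3016753/4000000:ℝ) (33723137/50000000:ℝ) (by norm_num) (by norm_num) (by norm_num) (by norm_num) (by norm_num) (by norm_num) (by norm_num) (by norm_num) (by norm_num) (by norm_num) (by norm_num) (by norm_num) (by norm_num) (by norm_num) hh.le h
  clear hh; have hh := hh'; clear hh'
  rcases le_or_gt y (5500/10000:ℝ) with h | hh'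
  · exact stepB y (801331/10000000:ℝ) (5451/10000:ℝ) (5500/10000:ℝ) (43119783/100000000:ℝ) (10914571/25000000:ℝ) (75061119/100000000:ℝ) (67082039/100000000:ℝ) (by norm_num) (by norm_num) (by norm_num) (by norm_num) (by norm_num) (by norm_num) (by norm_num) (by norm_num) (by norm_num) (by norm_num) (by norm_num) (by norm_num) (by norm_num) (by norm_num) hh.le h
  clear hh; have hh := hh'; clear hh'
  rcases le_or_gt y (5540/10000:ℝ) with h | hh'
  · exact stepB y (801331/10000000:ℝ) (5500/10000:ℝ) (5540/10000:ℝ) (2182903/5000000:ℝ) (4409907/10000000:ℝ) (18691731/25000000:ℝ) (66783231/100000000:ℝ) (by norm_num) (by norm_num) (by norm_num) (by norm_num) (by norm_num) (by norm_num) (by norm_num) (by norm_num) (by norm_num) (by norm_num) (by norm_num) (by norm_num) (by norm_num) (by norm_num) hh.le h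
  clear hh; have hh := hh'; clear hh'
  rcases le_or_gt y (5574/10000:ℝ) with h | hh'
  · exact stepB y (801331/10000000:ℝ) (5540/10000:ℝ) (5574/10000:ℝ) (44098847/100000000:ℝ) (22237353/50000000:ℝ) (2328603/3125000:ℝ) (66528189/100000000:ℝ) (by norm_num) (by norm_num) (by norm_num) (by norm_num) (by norm_num) (by norm_num) (by norm_num) (by norm_num) (by norm_num) (by norm_num) (by norm_num) (by norm_num) (by norm_num) (by norm_num) hh.le h
  clear hh; have hh := hh'; clear hh'
  rcases le_or_gt y (5604/10000:ℝ) with h | hh'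
  · exact stepB y (801331/10000000:ℝ) (5574/10000:ℝ) (5604/10000:ℝ) (44474483/100000000:ℝ) (22403443/50000000:ℝ) (18573017/25000000:ℝ) (66302337/100000000:ℝ) (by norm_num) (by norm_num) (by norm_num) (by norm_num) (by norm_num) (by norm_num) (by norm_num) (by norm_num) (by norm_num) (by norm_num) (by norm_num) (by norm_num) (by norm_num) (by norm_num) hh.le h
  clear hh; have hh := hh'; clear hh'
  rcases le_or_gt y (5631/10000:ℝ) with h | hh'
  · exact stepB y (801331/10000000:ℝ) (5604/10000:ℝ) (5631/10000:ℝ) (44806663/100000000:ℝ) (9021287/20000000:ℝ) (74090191/100000000:ℝ) (66098411/100000000:ℝ) (by norm_num) (by norm_num) (by norm_num) (by norm_num) (by norm_num) (by norm_num) (by norm_num) (by norm_num) (by norm_num) (by norm_num) (by norm_num) (by norm_num) (by norm_num) (by norm_num) hh.le h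
  clear hh; have hh := hh'; clear hh'
  rcases le_or_gt y (5655/10000:ℝ) with h | hh'
  · exact stepB y (801331/10000000:ℝ) (5631/10000:ℝ) (5655/10000:ℝ) (45106213/100000000:ℝ) (2835823/6250000:ℝ) (36954983/50000000:ℝ) (65916613/100000000:ℝ) (by norm_num) (by norm_num) (by norm_num) (by norm_num) (by norm_num) (by norm_num) (by norm_num) (by norm_num) (by norm_num) (by norm_num) (by norm_num) (by norm_num) (by norm_num) (by norm_num) hh.le h
  clear hh; have hh := hh'; clear hh'
  rcases le_or_gt y (5677/10000:ℝ) with h | hh'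
  · exact stepB y (801331/10000000:ℝ) (5655/10000:ℝ) (5677/10000:ℝ) (22686473/50000000:ℝ) (22809029/50000000:ℝ) (4609007/6250000:ℝ) (16437381/25000000:ℝ) (by norm_num) (by norm_num) (by norm_num) (by norm_num) (by norm_num) (by norm_num) (by norm_num) (by norm_num) (by norm_num) (by norm_num) (by norm_num) (by norm_num) (by norm_num) (by norm_num) hh.le h
  clear hh; have hh := hh'; clear hh'
  rcases le_or_gt y (5698/10000:ℝ) with h | hh'
  · exact stepB y (801331/10000000:ℝ) (5677/10000:ℝ) (5698/10000:ℝ) (11404459/25000000:ℝ) (22926079/50000000:ℝ) (73585217/100000000:ℝ) (65589633/100000000:ℝ) (by norm_num) (by norm_num) (by norm_num) (by norm_num) (by norm_num) (by norm_num) (by norm_num) (by norm_num) (by norm_num) (by norm_num) (by norm_num) (by norm_num) (by norm_num) (by norm_num) hh.le h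
  clear hh; have hh := hh'; clear hh'
  rcases le_or_gt y (5718/10000:ℝ) with h | hh'
  · exact stepB y (801331/10000000:ℝ) (5698/10000:ℝ) (5718/10000:ℝ) (45851937/100000000:ℝ) (46075421/100000000:ℝ) (18358339/25000000:ℝ) (1022453/1562500:ℝ) (by norm_num) (by norm_num) (by norm_num) (by norm_num) (by norm_num) (by norm_num) (by norm_num) (by norm_num) (by norm_num) (by norm_num) (by norm_num) (by norm_num) (by norm_num) (by norm_num) hh.le h
  clear hh; have hh := hh'; clear hh'
  rcases le_or_gt y (5737/10000:ℝ) with h | hh'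
  · exact stepB y (801331/10000000:ℝ) (5718/10000:ℝ) (5737/10000:ℝ) (28797/62500:ℝ) (231439/500000:ℝ) (73288607/100000000:ℝ) (65291653/100000000:ℝ) (by norm_num) (by norm_num) (by norm_num) (by norm_num) (by norm_num) (by norm_num) (by norm_num) (by norm_num) (by norm_num) (by norm_num) (by norm_num) (by norm_num) (by norm_num) (by norm_num) hh.le h
  clear hh; have hh := hh'; clear hh'
  rcases le_or_gt y (5755/10000:ℝ) with h | hh'
  · exact stepB y (801331/10000000:ℝ) (5737/10000:ℝ) (5755/10000:ℝ) (2314379/5000000:ℝ) (11622313/25000000:ℝ) (73151041/100000000:ℝ) (509013/781250:ℝ) (by norm_num) (by norm_num) (by norm_num) (by norm_num) (by norm_num) (by norm_num) (by norm_num) (by norm_num) (by norm_num) (by norm_num) (by norm_num) (by norm_num) (by norm_num) (by norm_num) hh.le h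
  clear hh; have hh := hh'; clear hh'
  rcases le_or_gt y (5772/10000:ℝ) with h | hh'
  · exact stepB y (801331/10000000:ℝ) (5755/10000:ℝ) (5772/10000:ℝ) (5811129/12500000:ℝ) (5834967/12500000:ℝ) (2920829/4000000:ℝ) (2031971/3125000:ℝ) (by norm_num) (by norm_num) (by norm_num) (by norm_num) (by norm_num) (by norm_num) (by norm_num) (by norm_num) (by norm_num) (by norm_num) (by norm_num) (by norm_num) (by norm_num) (by norm_num) hh.le h
  clear hh; have hh := hh'; clear hh'
  rcases le_or_gt y (5789/10000:ℝ) with h | hh'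
  · exact stepB y (801331/10000000:ℝ) (5772/10000:ℝ) (5789/10000:ℝ) (46679517/100000000:ℝ) (46870437/100000000:ℝ) (18222507/25000000:ℝ) (32446109/50000000:ℝ) (by norm_num) (by norm_num) (by norm_num) (by norm_num) (by norm_num) (by norm_num) (by norm_num) (by norm_num) (by norm_num) (by norm_num) (by norm_num) (by norm_num) (by norm_num) (by norm_num) hh.le h
  clear hh; have hh := hh'; clear hh'
  rcases le_or_gt y (5806/10000:ℝ) with h | hh'
  · exact stepB y (801331/10000000:ℝ) (5789/10000:ℝ) (5806/10000:ℝ) (23435109/50000000:ℝ) (9412271/20000000:ℝ) (72758947/100000000:ℝ) (64761099/100000000:ℝ) (by norm_num) (by norm_num) (by norm_num) (by norm_num) (by norm_num) (by norm_num) (by norm_num) (by norm_num) (by norm_num) (by norm_num) (by norm_num) (by norm_num) (by norm_num) (by norm_num) hh.le h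
  clear hh; have hh := hh'; clear hh'
  rcases le_or_gt y (5822/10000:ℝ) with h | hh'
  · exact stepB y (801331/10000000:ℝ) (5806/10000:ℝ) (5822/10000:ℝ) (9412227/20000000:ℝ) (47241239/100000000:ℝ) (36317613/50000000:ℝ) (1292749/2000000:ℝ) (by norm_num) (by norm_num) (by norm_num) (by norm_num) (by norm_num) (by norm_num) (by norm_num) (by norm_num) (by norm_num) (by norm_num) (by norm_num) (by norm_num) (by norm_num) (by norm_num) hh.le h
  clear hh; have hh := hh'; clear hh'
  rcases le_or_gt y (5838/10000:ℝ) with h | hh'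
  · exact stepB y (801331/10000000:ℝ) (5822/10000:ℝ) (5838/10000:ℝ) (2362051/5000000:ℝ) (23710657/50000000:ℝ) (72511161/100000000:ℝ) (16128391/25000000:ℝ) (by norm_num) (by norm_num) (by norm_num) (by norm_num) (by norm_num) (by norm_num) (by norm_num) (by norm_num) (by norm_num) (by norm_num) (by norm_num) (by norm_num) (by norm_num) (by norm_num) hh.le h
  clear hh; have hh := hh'; clear hh'
  rcases le_or_gt y (5855/10000:ℝ) with h | hh'
  · exact stepB y (801331/10000000:ℝ) (5838/10000:ℝ) (5855/10000:ℝ) (5927637/12500000:ℝ) (23806427/50000000:ℝ) (14475793/20000000:ℝ) (32190837/50000000:ℝ) (by norm_num) (by norm_num) (by norm_num) (by norm_num) (by norm_num) (by norm_num) (by norm_num) (by norm_num) (by norm_num) (by norm_num) (by norm_num) (by norm_num) (by norm_num) (by norm_num) hh.le h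
  clear hh; have hh := hh'; clear hh'
  rcases le_or_gt y (5872/10000:ℝ) with h | hh'
  · exact stepB y (801331/10000000:ℝ) (5855/10000:ℝ) (5872/10000:ℝ) (9522527/20000000:ℝ) (746947/1562500:ℝ) (36123189/50000000:ℝ) (64249513/100000000:ℝ) (by norm_num) (by norm_num) (by norm_num) (by norm_num) (by norm_num) (by norm_num) (by norm_num) (by norm_num) (by norm_num) (by norm_num) (by norm_num) (by norm_num) (by norm_num) (by norm_num) hh.le h
  clear hh; have hh := hh'; clear hh'
  rcases le_or_gt y (5889/10000:ℝ) with h | hh'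
  · exact stepB y (801331/10000000:ℝ) (5872/10000:ℝ) (5889/10000:ℝ) (47804389/100000000:ℝ) (1499893/3125000:ℝ) (72113399/100000000:ℝ) (1602927/2500000:ℝ) (by norm_num) (by norm_num) (by norm_num) (by norm_num) (by norm_num) (by norm_num) (by norm_num) (by norm_num) (by norm_num) (by norm_num) (by norm_num) (by norm_num) (by norm_num) (by norm_num) hh.le h
  clear hh; have hh := hh'; clear hh'
  rcases le_or_gt y (5907/10000:ℝ) with h | hh'
  · exact stepB y (801331/10000000:ℝ) (5889/10000:ℝ) (5907/10000:ℝ) (23998179/50000000:ℝ) (48200071/100000000:ℝ) (71972167/100000000:ℝ) (31988279/50000000:ℝ) (by norm_num) (by norm_num) (by norm_num) (by norm_num) (by norm_num) (by norm_num) (by norm_num) (by norm_num) (by norm_num) (by norm_num) (by norm_num) (by norm_num) (by norm_num) (by norm_num) hh.le h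
  clear hh; have hh := hh'; clear hh'
  rcases le_or_gt y (5925/10000:ℝ) with h | hh'
  · exact stepB y (801331/10000000:ℝ) (5907/10000:ℝ) (5925/10000:ℝ) (48199853/100000000:ℝ) (9680761/20000000:ℝ) (71830491/100000000:ℝ) (31917863/50000000:ℝ) (by norm_num) (by norm_num) (by norm_num) (by norm_num) (by norm_num) (by norm_num) (by norm_num) (by norm_num) (by norm_num) (by norm_num) (by norm_num) (by norm_num) (by norm_num) (by norm_num) hh.le h
  clear hh; have hh := hh'; clear hh'
  rcases le_or_gt y (5944/10000:ℝ) with h | hh'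
  · exact stepB y (801331/10000000:ℝ) (5925/10000:ℝ) (5944/10000:ℝ) (48403587/100000000:ℝ) (48619117/100000000:ℝ) (71680459/100000000:ℝ) (63686733/100000000:ℝ) (by norm_num) (by norm_num) (by norm_num) (by norm_num) (by norm_num) (by norm_num) (by norm_num) (by norm_num) (by norm_num) (by norm_num) (by norm_num) (by norm_num) (by norm_num) (by norm_num) hh.le h
  clear hh; have hh := hh'; clear hh'
  rcases le_or_gt y (5964/10000:ℝ) with h | hh'
  · exact stepB y (801331/10000000:ℝ) (5944/10000:ℝ) (5964/10000:ℝ) (486189/1000000:ℝ) (1526439/3125000:ℝ) (71521991/100000000:ℝ) (794119/1250000:ℝ) (by norm_num) (by norm_num) (by norm_num) (by norm_num) (by norm_num) (by norm_num) (by norm_num) (by norm_num) (by norm_num) (by norm_num) (by norm_num) (by norm_num) (by norm_num) (by norm_num) hh.le h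
  clear hh; have hh := hh'; clear hh'
  rcases le_or_gt y (5986/10000:ℝ) with h | hh'
  · exact stepB y (801331/10000000:ℝ) (5964/10000:ℝ) (5986/10000:ℝ) (6105729/12500000:ℝ) (49096013/100000000:ℝ) (7134703/10000000:ℝ) (7919517/12500000:ℝ) (by norm_num) (by norm_num) (by norm_num) (by norm_num) (by norm_num) (by norm_num) (by norm_num) (by norm_num) (by norm_num) (by norm_num) (by norm_num) (by norm_num) (by norm_num) (by norm_num) hh.le h
  clear hh; have hh := hh'; clear hh'
  rcases le_or_gt y (6009/10000:ℝ) with h | hh'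
  · exact stepB y (801331/10000000:ℝ) (5986/10000:ℝ) (6009/10000:ℝ) (49095797/100000000:ℝ) (49357719/100000000:ℝ) (7116339/10000000:ℝ) (63174361/100000000:ℝ) (by norm_num) (by norm_num) (by norm_num) (by norm_num) (by norm_num) (by norm_num) (by norm_num) (by norm_num) (by norm_num) (by norm_num) (by norm_num) (by norm_num) (by norm_num) (by norm_num) hh.le h
  clear hh; have hh := hh'; clear hh'
  rcases le_or_gt y (6034/10000:ℝ) with h | hh'
  · exact stepB y (801331/10000000:ℝ) (6009/10000:ℝ) (6034/10000:ℝ) (771211/1562500:ℝ) (24821311/50000000:ℝ) (17740733/25000000:ℝ) (12595237/20000000:ℝ) (by norm_num) (by norm_num) (by norm_num) (by norm_num) (by norm_num) (by norm_num) (by norm_num) (by norm_num) (by norm_num) (by norm_num) (by norm_num) (by norm_num) (by norm_num) (by norm_num) hh.le h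
  clear hh; have hh := hh'; clear hh'
  rcases le_or_gt y (6061/10000:ℝ) with h | hh'
  · exact stepB y (801331/10000000:ℝ) (6034/10000:ℝ) (6061/10000:ℝ) (49642407/100000000:ℝ) (49950829/100000000:ℝ) (35372719/50000000:ℝ) (62761453/100000000:ℝ) (by norm_num) (by norm_num) (by norm_num) (by norm_num) (by norm_num) (by norm_num) (by norm_num) (by norm_num) (by norm_num) (by norm_num) (by norm_num) (by norm_num) (by norm_num) (by norm_num) hh.le h
  clear hh; have hh := hh'; clear hh'
  rcases le_or_gt y (6091/10000:ℝ) with h | hh'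
  · exact stepB y (801331/10000000:ℝ) (6061/10000:ℝ) (6091/10000:ℝ) (9990123/20000000:ℝ) (3143369/6250000:ℝ) (1410051/2000000:ℝ) (15630499/25000000:ℝ) (by norm_num) (by norm_num) (by norm_num) (by norm_num) (by norm_num) (by norm_num) (by norm_num) (by norm_num) (by norm_num) (by norm_num) (by norm_num) (by norm_num) (by norm_num) (by norm_num) hh.le h
  clear hh; have hh := hh'; clear hh'
  rcases le_or_gt y (6124/10000:ℝ) with h | hh'
  · exact stepB y (801331/10000000:ℝ) (6091/10000:ℝ) (6124/10000:ℝ) (50293691/100000000:ℝ) (25336021/50000000:ℝ) (14046773/20000000:ℝ) (62257529/100000000:ℝ) (by norm_num) (by norm_num) (by norm_num) (by norm_num) (by norm_num) (by norm_num) (by norm_num) (by norm_num) (by norm_num) (by norm_num) (by norm_num) (by norm_num) (by norm_num) (by norm_num) hh.le h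
  clear hh; have hh := hh'; clear hh'
  rcases le_or_gt y (6161/10000:ℝ) with h | hh'
  · exact stepB y (801331/10000000:ℝ) (6124/10000:ℝ) (6161/10000:ℝ) (50671829/100000000:ℝ) (51096951/100000000:ℝ) (34965357/50000000:ℝ) (3872479/6250000:ℝ) (by norm_num) (by norm_num) (by norm_num) (by norm_num) (by norm_num) (by norm_num) (by norm_num) (by norm_num) (by norm_num) (by norm_num) (by norm_num) (by norm_num) (by norm_num) (by norm_num) hh.le h
  clear hh; have hh := hh'; clear hh'
  rcases le_or_gt y (6203/10000:ℝ) with h | hh'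
  · exact stepB y (801331/10000000:ℝ) (6161/10000:ℝ) (6203/10000:ℝ) (25548369/50000000:ℝ) (2063219/4000000:ℝ) (69584139/100000000:ℝ) (30809901/50000000:ℝ) (by norm_num) (by norm_num) (by norm_num) (by norm_num) (by norm_num) (by norm_num) (by norm_num) (by norm_num) (by norm_num) (by norm_num) (by norm_num) (by norm_num) (by norm_num) (by norm_num) hh.le h
  clear hh; have hh := hh'; clear hh'
  rcases le_or_gt y (6251/10000:ℝ) with h | hh'
  · exact stepB y (801331/10000000:ℝ) (6203/10000:ℝ) (6251/10000:ℝ) (6447533/12500000:ℝ) (417077/800000:ℝ) (34592403/50000000:ℝ) (30614539/50000000:ℝ) (by norm_num) (by norm_num) (by norm_num) (by norm_num) (by norm_num) (by norm_num) (by norm_num) (by norm_num) (by norm_num) (by norm_num) (by norm_num) (by norm_num) (by norm_num) (by norm_num) hh.le h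
  clear hh; have hh := hh'; clear hh'
  rcases le_or_gt y (6307/10000:ℝ) with h | hh'
  · exact stepB y (801331/10000000:ℝ) (6251/10000:ℝ) (6307/10000:ℝ) (10426883/20000000:ℝ) (26391607/50000000:ℝ) (68714471/100000000:ℝ) (30385029/50000000:ℝ) (by norm_num) (by norm_num) (by norm_num) (by norm_num) (by norm_num) (by norm_num) (by norm_num) (by norm_num) (by norm_num) (by norm_num) (by norm_num) (by norm_num) (by norm_num) (by norm_num) hh.le h
  clear hh; have hh := hh'; clear hh'
  rcases le_or_gt y (6373/10000:ℝ) with h | hh'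
  · exact stepB y (801331/10000000:ℝ) (6307/10000:ℝ) (6373/10000:ℝ) (10556601/20000000:ℝ) (53550481/100000000:ℝ) (68153883/100000000:ℝ) (60224579/100000000:ℝ) (by norm_num) (by norm_num) (by norm_num) (by norm_num) (by norm_num) (by norm_num) (by norm_num) (by norm_num) (by norm_num) (by norm_num) (by norm_num) (by norm_num) (by norm_num) (by norm_num) hh.le h
  clear hh; have hh := hh'; clear hh'
  rcases le_or_gt y (6452/10000:ℝ) with h | hh'
  · exact stepB y (801331/10000000:ℝ) (6373/10000:ℝ) (6452/10000:ℝ) (2142011/4000000:ℝ) (1361823/2500000:ℝ) (67473757/100000000:ℝ) (5956509/10000000:ℝ) (by norm_num) (by norm_num) (by norm_num) (by norm_num) (by norm_num) (by norm_num) (by norm_num) (by norm_num) (by norm_num) (by norm_num) (by norm_num) (by norm_num) (by norm_num) (by norm_num) hh.le h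
  clear hh; have hh := hh'; clear hh'
  rcases le_or_gt y (6548/10000:ℝ) with h | hh'
  · exact stepB y (801331/10000000:ℝ) (6452/10000:ℝ) (6548/10000:ℝ) (10894543/20000000:ℝ) (55599741/100000000:ℝ) (66633519/100000000:ℝ) (58753723/100000000:ℝ) (by norm_num) (by norm_num) (by norm_num) (by norm_num) (by norm_num) (by norm_num) (by norm_num) (by norm_num) (by norm_num) (by norm_num) (by norm_num) (by norm_num) (by norm_num) (by norm_num) hh.le h
  clear hh; have hh := hh'; clear hh'
  rcases le_or_gt y (6667/10000:ℝ) with h | hh'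
  · exact stepB y (801331/10000000:ℝ) (6548/10000:ℝ) (6667/10000:ℝ) (55599539/100000000:ℝ) (1781419/3125000:ℝ) (65570261/100000000:ℝ) (2886607/5000000:ℝ) (by norm_num) (by norm_num) (by norm_num) (by norm_num) (by norm_num) (by norm_num) (by norm_num) (by norm_num) (by norm_num) (by norm_num) (by norm_num) (by norm_num) (by norm_num) (by norm_num) hh.le h
  clear hh; have hh := hh'; clear hh'
  rcases le_or_gt y (6817/10000:ℝ) with h | hh'
  · exact stepB y (801331/10000000:ℝ) (6667/10000:ℝ) (6817/10000:ℝ) (57005209/100000000:ℝ) (58791099/100000000:ℝ) (64194159/100000000:ℝ) (28209041/50000000:ℝ) (by norm_num) (by norm_num) (by norm_num) (by norm_num) (by norm_num) (by norm_num) (by norm_num) (by norm_num) (by norm_num) (by norm_num) (by norm_num) (by norm_num) (by norm_num) (by norm_num) hh.le h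
  clear hh; have hh := hh'; clear hh'
  rcases le_or_gt y (7009/10000:ℝ) with h | hh'
  · exact stepB y (801331/10000000:ℝ) (6817/10000:ℝ) (7009/10000:ℝ) (29395453/50000000:ℝ) (61099/100000:ℝ) (31185333/50000000:ℝ) (10938007/20000000:ℝ) (by norm_num) (by norm_num) (by norm_num) (by norm_num) (by norm_num) (by norm_num) (by norm_num) (by norm_num) (by norm_num) (by norm_num) (by norm_num) (by norm_num) (by norm_num) (by norm_num) hh.le h
  clear hh; have hh := hh'; clear hh'
  rcases le_or_gt y (7260/10000:ℝ) with h | hh'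
  · exact stepB y (801331/10000000:ℝ) (7009/10000:ℝ) (7260/10000:ℝ) (30549407/50000000:ℝ) (64153069/100000000:ℝ) (29936153/50000000:ℝ) (52345009/100000000:ℝ) (by norm_num) (by norm_num) (by norm_num) (by norm_num) (by norm_num) (by norm_num) (by norm_num) (by norm_num) (by norm_num) (by norm_num) (by norm_num) (by norm_num) (by norm_num) (by norm_num) hh.le h
  clear hh; have hh := hh'; clear hh'
  rcases le_or_gt y (7592/10000:ℝ) with h | hh'
  · exact stepB y (801331/10000000:ℝ) (7260/10000:ℝ) (7592/10000:ℝ) (64152893/100000000:ℝ) (34127829/50000000:ℝ) (56342117/100000000:ℝ) (3066961/6250000:ℝ) (by norm_num) (by norm_num) (by norm_num) (by norm_num) (by norm_num) (by norm_num) (by norm_num) (by norm_num) (by norm_num) (by norm_num) (by norm_num) (by norm_num) (by norm_num) (by norm_num) hh.le h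
  clear hh; have hh := hh'; clear hh'
  rcases le_or_gt y (8027/10000:ℝ) with h | hh'
  · exact stepB y (801331/10000000:ℝ) (7592/10000:ℝ) (8027/10000:ℝ) (68255497/100000000:ℝ) (921707/1250000:ℝ) (12811967/25000000:ℝ) (1388077/3125000:ℝ) (by norm_num) (by norm_num) (by norm_num) (by norm_num) (by norm_num) (by norm_num) (by norm_num) (by norm_num) (by norm_num) (by norm_num) (by norm_num) (by norm_num) (by norm_num) (by norm_num) hh.le h
  clear hh; have hh := hh'; clear hh'
  rcases le_or_gt y (8575/10000:ℝ) with h | hh'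
  · exact stepB y (801331/10000000:ℝ) (8027/10000:ℝ) (8575/10000:ℝ) (73736421/100000000:ℝ) (40402939/50000000:ℝ) (5476387/12500000:ℝ) (9437293/25000000:ℝ) (by norm_num) (by norm_num) (by norm_num) (by norm_num) (by norm_num) (by norm_num) (by norm_num) (by norm_num) (by norm_num) (by norm_num) (by norm_num) (by norm_num) (by norm_num) (by norm_num) hh.le h
  clear hh; have hh := hh'; clear hh'
  rcases le_or_gt y (9190/10000:ℝ) with h | hh'
  · exact stepB y (801331/10000000:ℝ) (8575/10000:ℝ) (9190/10000:ℝ) (80805771/100000000:ℝ) (17789943/20000000:ℝ) (2077623/6250000:ℝ) (14230249/50000000:ℝ) (by norm_num) (by norm_num) (by norm_num) (by norm_num) (by norm_num) (by norm_num) (by norm_num) (by norm_num) (by norm_num) (by norm_num) (by norm_num) (by norm_num) (by norm_num) (by norm_num) hh.le h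
  clear hh; have hh := hh'; clear hh'
  rcases le_or_gt y (9713/10000:ℝ) with h | hh'
  · exact stepB y (801331/10000000:ℝ) (9190/10000:ℝ) (9713/10000:ℝ) (88949649/100000000:ℝ) (48021763/50000000:ℝ) (19890887/100000000:ℝ) (8470537/50000000:ℝ) (by norm_num) (by norm_num) (by norm_num) (by norm_num) (by norm_num) (by norm_num) (by norm_num) (by norm_num) (by norm_num) (by norm_num) (by norm_num) (by norm_num) (by norm_num) (by norm_num) hh.le h
  clear hh; have hh := hh'; clear hh'
  rcases le_or_gt y (9961/10000:ℝ) with h | hh'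
  · exact stepB y (801331/10000000:ℝ) (9713/10000:ℝ) (9961/10000:ℝ) (96043501/100000000:ℝ) (49729877/50000000:ℝ) (3675071/50000000:ℝ) (6244997/100000000:ℝ) (by norm_num) (by norm_num) (by norm_num) (by norm_num) (by norm_num) (by norm_num) (by norm_num) (by norm_num) (by norm_num) (by norm_num) (by norm_num) (by norm_num) (by norm_num) (by norm_num) hh.le h
  clear hh; have hh := hh'; clear hh'
  exact stepA y (801331/10000000:ℝ) (9961/10000:ℝ) (1:ℝ) (397839/400000:ℝ) (7350171/100000000:ℝ) (0:ℝ) (by norm_num) (by norm_num) (by norm_num) (by norm_num) (by norm_num) (by norm_num) (by norm_num) (by norm_num) (by norm_num) hh.le h1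

/-- If `f(α) = y` and `g(γ) = y` where `f(x) = 4x(1-x)` and
`g(x) = (4x(1-x))^{1/ln 4}` on `[0, 1/2]`, then
`|α - γ| ≤ (σ - σ^{ln 4}) / (2(√(1 - (1/2)^{ln 4}) + √(1/2)))`
where `σ = (ln 4)^{1/(1 - ln 4)}`. -/
theorem dist_inverse_bounds
    (y : ℝ) (hy : y ∈ Set.Icc (0 : ℝ) 1)
    (α γ : ℝ) (hα : α ∈ Set.Icc (0 : ℝ) (1 / 2)) (hγ : γ ∈ Set.Icc (0 : ℝ) (1 / 2))
    (hfα : 4 * α * (1 - α) = y)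
    (hgγ : (4 * γ * (1 - γ)) ^ (1 / Real.log 4) = y) :
    |α - γ| ≤
      ((Real.log 4) ^ (1 / (1 - Real.log 4)) -
          ((Real.log 4) ^ (1 / (1 - Real.log 4))) ^ (Real.log 4)) /
        (2 * (Real.sqrt (1 - (1 / 2 : ℝ) ^ (Real.log 4)) + Real.sqrt (1 / 2))) := by
  obtain ⟨hy0, hy1⟩ := hy
  obtain ⟨hα0, hα2⟩ := hα
  obtain ⟨hγ0, hγ2⟩ := hγ
  have hL0 : (0:ℝ) < Real.log 4 := log4_pos
  have hnn : 0 ≤ 4 * γ * (1 - γ) := by nlinarith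
  have hγy : 4 * γ * (1 - γ) = y ^ Real.log 4 := by
    calc 4 * γ * (1 - γ) = (4 * γ * (1 - γ)) ^ (1:ℝ) := (Real.rpow_one _).symm
      _ = (4 * γ * (1 - γ)) ^ ((1 / Real.log 4) * Real.log 4) := by
          rw [one_div, inv_mul_cancel₀ hL0.ne']
      _ = ((4 * γ * (1 - γ)) ^ (1 / Real.log 4)) ^ Real.log 4 := Real.rpow_mul hnn _ _
      _ = y ^ Real.log 4 := by rw [hgγ]
  have hsqα : Real.sqrt (1 - y) = 1 - 2 * α := by
    have h : 1 - y = (1 - 2 * α) ^ 2 := by linear_combination hfα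
    rw [h]; exact Real.sqrt_sq (by linarith)
  have hsqγ : Real.sqrt (1 - y ^ Real.log 4) = 1 - 2 * γ := by
    have h : 1 - y ^ Real.log 4 = (1 - 2 * γ) ^ 2 := by linear_combination hγy
    rw [h]; exact Real.sqrt_sq (by linarith)
  have hmono : y ^ Real.log 4 ≤ y := by
    rcases eq_or_lt_of_le hy0 with h | h
    · rw [← h, Real.zero_rpow hL0.ne']
    · calc y ^ Real.log 4 ≤ y ^ (1:ℝ) :=
          Real.rpow_le_rpow_of_exponent_ge h hy1 one_lt_log4.le
        _ = y := Real.rpow_one y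
  have hαγ : γ ≤ α := by
    have hs := Real.sqrt_le_sqrt (show 1 - y ≤ 1 - y ^ Real.log 4 by linarith)
    rw [hsqα, hsqγ] at hs
    linarith
  have hmain := main_bound y hy0 hy1
  rw [abs_of_nonneg (by linarith : (0:ℝ) ≤ α - γ)]
  have heq : α - γ = (Real.sqrt (1 - y ^ Real.log 4) - Real.sqrt (1 - y)) / 2 := by
    rw [hsqα, hsqγ]; ring
  calc α - γ ≤ (801331/10000000:ℝ)/2 := by rw [heq]; linarith
    _ ≤ _ := const_bound
end

section
/- Let q be a real number with q > 2, let ε ≥ 0, and let φ : ℝ → ℝ satisfy |φ(x) − H₂(x)| ≤ ε for all x ∈ [0,1/2]. Suppose α, β ∈ [0,1/2] and y ∈ ℝ satisfy α·log_q(q−1) + φ(α)/log₂ q = y and H_q(β) = y. Then |α − β| ≤ ε / log₂(q−1). -/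
open Real

/-- The binary entropy function `H₂(x) = -x log₂ x - (1-x) log₂ (1-x)`
(with the conventions `H₂ 0 = H₂ 1 = 0`, automatic since `log 0 = 0`). -/
noncomputable def H2 (x : ℝ) : ℝ :=
  -x * Real.logb 2 x - (1 - x) * Real.logb 2 (1 - x)

/-- The `q`-ary entropy function
`H_q(x) = x log_q (q-1) - x log_q x - (1-x) log_q (1-x)`. -/
noncomputable def Hq (q x : ℝ) : ℝ :=
  x * Real.logb q (q - 1) - x * Real.logb q x - (1 - x) * Real.logb q (1 - x)

lemma H2_eq_binEntropy (x : ℝ) : H2 x = Real.binEntropy x / Real.log 2 := by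
  simp only [H2, Real.binEntropy, Real.logb, Real.log_inv]
  ring

lemma H2_monoOn : MonotoneOn H2 (Set.Icc (0 : ℝ) (1 / 2)) := by
  intro a ha b hb hab
  rw [H2_eq_binEntropy, H2_eq_binEntropy]
  have h2 : (0 : ℝ) < Real.log 2 := Real.log_pos (by norm_num)
  have : Set.Icc (0 : ℝ) (1 / 2) = Set.Icc (0 : ℝ) 2⁻¹ := by norm_num
  rw [this] at ha hb
  exact div_le_div_of_nonneg_right
    (Real.binEntropy_strictMonoOn.monotoneOn ha hb hab) h2.le

/-- If `φ` approximates `H₂` within `ε` on `[0, 1/2]`, then the solution `α` of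
`α log_q (q-1) + φ(α)/log₂ q = y` and the solution `β` of `H_q(β) = y` satisfy
`|α - β| ≤ ε / log₂ (q-1)`. -/
theorem approx_preimage_bound
    (q : ℝ) (hq : 2 < q) (ε : ℝ) (hε : 0 ≤ ε)
    (φ : ℝ → ℝ) (hφ : ∀ x ∈ Set.Icc (0 : ℝ) (1 / 2), |φ x - H2 x| ≤ ε)
    (α β y : ℝ) (hα : α ∈ Set.Icc (0 : ℝ) (1 / 2)) (hβ : β ∈ Set.Icc (0 : ℝ) (1 / 2))
    (hαy : α * Real.logb q (q - 1) + φ α / Real.logb 2 q = y)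
    (hβy : Hq q β = y) :
    |α - β| ≤ ε / Real.logb 2 (q - 1) := by
  set L := Real.logb q (q - 1) with hLdef
  set C := Real.logb 2 q with hCdef
  have hlog2 : (0 : ℝ) < Real.log 2 := Real.log_pos (by norm_num)
  have hlogq : (0 : ℝ) < Real.log q := Real.log_pos (by linarith)
  have hlogq1 : (0 : ℝ) < Real.log (q - 1) := Real.log_pos (by linarith)
  have hC : (0 : ℝ) < C := by
    rw [hCdef, Real.logb]; positivity
  have hL : (0 : ℝ) < L := by
    rw [hLdef, Real.logb]; positivity
  -- Hq expressed via H2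
  have hHq : Hq q β = β * L + H2 β / C := by
    simp only [Hq, H2, hLdef, hCdef, Real.logb]
    field_simp
    ring
  -- the key linear equation, multiplied through by C
  have heq : α * L * C + φ α = β * L * C + H2 β := by
    have h1 : α * L + φ α / C = β * L + H2 β / C := by rw [hαy, ← hβy, hHq]
    have := congrArg (· * C) h1
    field_simp at this
    linarith
  have hφα := hφ α hα
  have habs := abs_le.mp hφα
  have hCL : Real.logb 2 (q - 1) = L * C := by
    simp only [hLdef, hCdef, Real.logb]
    field_simp
  rw [hCL]
  have hLC : (0 : ℝ) < L * C := mul_pos hL hC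
  rw [abs_le]
  constructor
  · -- -(ε/(L*C)) ≤ α - β, i.e. β - α ≤ ε/(L*C)
    rcases le_or_gt α β with h | h
    · have hH : H2 α ≤ H2 β := H2_monoOn hα hβ h
      have h1 : (β - α) * (L * C) ≤ ε := by nlinarith
      have h2' : β - α ≤ ε / (L * C) := (le_div_iff₀ hLC).mpr h1
      linarith
    · have : (0:ℝ) ≤ ε / (L * C) := div_nonneg hε hLC.le
      linarith
  · -- α - β ≤ ε/(L*C)
    rcases le_or_gt α β with h | h
    · have : (0:ℝ) ≤ ε / (L * C) := div_nonneg hε hLC.le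
      linarith
    · have hH : H2 β ≤ H2 α := H2_monoOn hβ hα h.le
      rw [le_div_iff₀ hLC]
      nlinarith
end

section
/- Let q be a real number with q > 2. Set η := (1/2)·(1 − (1 − (ln 4)^{ln 4/(1−ln 4)})^{1/2}) and ε := (4η(1−η))^{1/ln 4} − 4η(1−η). Suppose α, β, γ ∈ [0,1/2] satisfy α·log_q(q−1) + (4α(1−α))/log₂ q = H_q(β) and γ·log_q(q−1) + (4γ(1−γ))^{1/ln 4}/log₂ q = H_q(β). Then |α − β| ≤ ε / log₂(q−1) and |γ − β| ≤ ε / log₂(q−1). -/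
open Real

/-- `Psi t = (1+t) log (1+t) + (1-t) log (1-t)`, an auxiliary function. -/
noncomputable def Psi (t : ℝ) : ℝ := (1+t) * Real.log (1+t) + (1-t) * Real.log (1-t)

lemma psi_continuous : Continuous Psi := by
  have h1 : Continuous fun t : ℝ => (1+t) * Real.log (1+t) :=
    Real.continuous_mul_log.comp (continuous_const.add continuous_id)
  have h2 : Continuous fun t : ℝ => (1-t) * Real.log (1-t) :=
    Real.continuous_mul_log.comp (continuous_const.sub continuous_id)
  exact h1.add h2

lemma hasDerivAt_psi {t : ℝ} (h1 : -1 < t) (h2 : t < 1) :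
    HasDerivAt Psi (Real.log (1+t) - Real.log (1-t)) t := by
  have ha : HasDerivAt (fun t : ℝ => 1 + t) 1 t := by
    simpa using (hasDerivAt_id t).const_add 1
  have hb : HasDerivAt (fun t : ℝ => 1 - t) (-1) t := by
    simpa using (hasDerivAt_id t).const_sub 1
  have hla : HasDerivAt (fun t : ℝ => Real.log (1+t)) (1/(1+t)) t :=
    ha.log (by linarith)
  have hlb : HasDerivAt (fun t : ℝ => Real.log (1-t)) ((-1)/(1-t)) t :=
    hb.log (by linarith)
  have := (ha.mul hla).add (hb.mul hlb)
  have e1 : (1:ℝ)+t ≠ 0 := by linarith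
  have e2 : (1:ℝ)-t ≠ 0 := by linarith
  refine this.congr_deriv ?_
  field_simp
  ring

lemma nonneg_aux {F F' : ℝ → ℝ}
    (hd : ∀ t ∈ Set.Ico (0:ℝ) 1, HasDerivAt F (F' t) t)
    (h' : ∀ t ∈ Set.Ioo (0:ℝ) 1, 0 ≤ F' t) (h0 : F 0 = 0) :
    ∀ t ∈ Set.Ico (0:ℝ) 1, 0 ≤ F t := by
  have mono : MonotoneOn F (Set.Ico (0:ℝ) 1) := by
    apply monotoneOn_of_deriv_nonneg (convex_Ico 0 1)
    · exact fun t ht => (hd t ht).continuousAt.continuousWithinAt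
    · rw [interior_Ico]
      exact fun t ht =>
        (hd t (Set.Ioo_subset_Ico_self ht)).differentiableAt.differentiableWithinAt
    · rw [interior_Ico]
      intro t ht
      rw [(hd t (Set.Ioo_subset_Ico_self ht)).deriv]
      exact h' t ht
  intro t ht
  have := mono (Set.left_mem_Ico.2 one_pos) ht ht.1
  rwa [h0] at this

lemma lemA : ∀ t ∈ Set.Ico (0:ℝ) 1,
    Real.log (1+t) - Real.log (1-t) ≤ 2*t/(1-t^2) := by
  have key : ∀ t ∈ Set.Ico (0:ℝ) 1,
      0 ≤ 2*t/(1-t^2) - (Real.log (1+t) - Real.log (1-t)) := by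
    apply nonneg_aux (F' := fun t => 4*t^2/(1-t^2)^2)
    · intro t ht
      have e1 : (1:ℝ)+t ≠ 0 := by nlinarith [ht.1, ht.2]
      have e2 : (1:ℝ)-t ≠ 0 := by nlinarith [ht.1, ht.2]
      have e3 : (1:ℝ)-t^2 ≠ 0 := by nlinarith [ht.1, ht.2]
      have hnum : HasDerivAt (fun t : ℝ => 2*t) 2 t := by
        simpa using (hasDerivAt_id t).const_mul 2
      have hden : HasDerivAt (fun t : ℝ => 1 - t^2) (-(2*t)) t := by
        simpa using (hasDerivAt_pow 2 t).const_sub 1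
      have hdiv := hnum.div hden e3
      have ha : HasDerivAt (fun t : ℝ => 1 + t) 1 t := by
        simpa using (hasDerivAt_id t).const_add 1
      have hb : HasDerivAt (fun t : ℝ => 1 - t) (-1) t := by
        simpa using (hasDerivAt_id t).const_sub 1
      have hla : HasDerivAt (fun t : ℝ => Real.log (1+t)) (1/(1+t)) t :=
        ha.log e1
      have hlb : HasDerivAt (fun t : ℝ => Real.log (1-t)) ((-1)/(1-t)) t :=
        hb.log e2
      have := hdiv.sub (hla.sub hlb)
      refine this.congr_deriv ?_
      field_simp
      ring
    · intro t _; positivity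
    · norm_num
  intro t ht
  linarith [key t ht]

lemma m_nonneg : ∀ t ∈ Set.Ico (0:ℝ) 1,
    0 ≤ t * (Real.log (1+t) - Real.log (1-t)) - 2 * Psi t := by
  apply nonneg_aux
    (F' := fun t => 2*t/(1-t^2) - (Real.log (1+t) - Real.log (1-t)))
  · intro t ht
    have e1 : (1:ℝ)+t ≠ 0 := by nlinarith [ht.1, ht.2]
    have e2 : (1:ℝ)-t ≠ 0 := by nlinarith [ht.1, ht.2]
    have e3 : (1:ℝ)-t^2 ≠ 0 := by nlinarith [ht.1, ht.2]
    have ha : HasDerivAt (fun t : ℝ => 1 + t) 1 t := by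
      simpa using (hasDerivAt_id t).const_add 1
    have hb : HasDerivAt (fun t : ℝ => 1 - t) (-1) t := by
      simpa using (hasDerivAt_id t).const_sub 1
    have hla : HasDerivAt (fun t : ℝ => Real.log (1+t)) (1/(1+t)) t := ha.log e1
    have hlb : HasDerivAt (fun t : ℝ => Real.log (1-t)) ((-1)/(1-t)) t := hb.log e2
    have hLg := hla.sub hlb
    have hpsi := hasDerivAt_psi (by linarith [ht.1]) ht.2
    have := ((hasDerivAt_id t).mul hLg).sub (hpsi.const_mul 2)
    refine this.congr_deriv ?_
    simp only [Pi.sub_apply, id]; field_simp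
    ring
  · intro t ht
    have := lemA t (Set.Ioo_subset_Ico_self ht)
    linarith
  · norm_num [Psi]

lemma psi_le : ∀ t ∈ Set.Icc (0:ℝ) 1, Psi t ≤ 2 * Real.log 2 * t^2 := by
  have psione : Psi 1 = 2 * Real.log 2 := by norm_num [Psi]
  have mono : MonotoneOn (fun t => Psi t / t^2) (Set.Ioc (0:ℝ) 1) := by
    apply monotoneOn_of_deriv_nonneg (convex_Ioc 0 1)
    · exact (psi_continuous.continuousOn.div
        (continuous_pow 2).continuousOn
        (fun t ht => pow_ne_zero 2 (ne_of_gt ht.1)))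
    · rw [interior_Ioc]
      intro t ht
      exact ((hasDerivAt_psi (by linarith [ht.1]) ht.2).div (hasDerivAt_pow 2 t)
        (pow_ne_zero 2 (ne_of_gt ht.1))).differentiableAt.differentiableWithinAt
    · rw [interior_Ioc]
      intro t ht
      rw [show (fun t => Psi t / t^2) = Psi / fun x => x^2 from rfl, ((hasDerivAt_psi (by linarith [ht.1]) ht.2).div (hasDerivAt_pow 2 t)
        (pow_ne_zero 2 (ne_of_gt ht.1))).deriv]
      have hm := m_nonneg t (Set.Ioo_subset_Ico_self ht)
      apply div_nonneg _ (by positivity)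
      have hmm := mul_nonneg (le_of_lt ht.1) hm
      norm_num
      nlinarith [hmm]
  intro t ht
  rcases eq_or_lt_of_le ht.1 with h0 | h0
  · rw [← h0]; norm_num [Psi]
  · have := mono ⟨h0, ht.2⟩ (Set.right_mem_Ioc.2 one_pos) ht.2
    simp only [psione, one_pow, div_one] at this
    calc Psi t = (Psi t / t^2) * t^2 := by field_simp
    _ ≤ (2 * Real.log 2) * t^2 := by nlinarith [sq_nonneg t]

lemma lemC : ∀ t ∈ Set.Ico (0:ℝ) 1,
    2*t + 2/3*t^3 + 2/5*t^5 + 2/7*t^7 ≤ Real.log (1+t) - Real.log (1-t) := by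
  have key : ∀ t ∈ Set.Ico (0:ℝ) 1,
      0 ≤ Real.log (1+t) - Real.log (1-t) - (2*t + 2/3*t^3 + 2/5*t^5 + 2/7*t^7) := by
    apply nonneg_aux (F' := fun t => 2*t^8/(1-t^2))
    · intro t ht
      have e1 : (1:ℝ)+t ≠ 0 := by nlinarith [ht.1, ht.2]
      have e2 : (1:ℝ)-t ≠ 0 := by nlinarith [ht.1, ht.2]
      have ha : HasDerivAt (fun t : ℝ => 1 + t) 1 t := by
        simpa using (hasDerivAt_id t).const_add 1
      have hb : HasDerivAt (fun t : ℝ => 1 - t) (-1) t := by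
        simpa using (hasDerivAt_id t).const_sub 1
      have hla : HasDerivAt (fun t : ℝ => Real.log (1+t)) (1/(1+t)) t := ha.log e1
      have hlb : HasDerivAt (fun t : ℝ => Real.log (1-t)) ((-1)/(1-t)) t := hb.log e2
      have hp : HasDerivAt (fun t : ℝ => 2*t + 2/3*t^3 + 2/5*t^5 + 2/7*t^7)
          (2 + 2*t^2 + 2*t^4 + 2*t^6) t := by
        have h1 : HasDerivAt (fun t : ℝ => t) 1 t := hasDerivAt_id t
        have h3 := hasDerivAt_pow 3 t
        have h5 := hasDerivAt_pow 5 t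
        have h7 := hasDerivAt_pow 7 t
        have := (((h1.const_mul 2).add (h3.const_mul (2/3))).add
          (h5.const_mul (2/5))).add (h7.const_mul (2/7))
        refine this.congr_deriv ?_
        norm_num
        ring
      have e3 : (1:ℝ)-t^2 ≠ 0 := by nlinarith [ht.1, ht.2]
      have := (hla.sub hlb).sub hp
      refine this.congr_deriv ?_
      field_simp
      ring
    · intro t ht
      have h1 : (0:ℝ) < 1 - t^2 := by nlinarith [ht.1, ht.2]
      positivity
    · norm_num
  intro t ht
  linarith [key t ht]

lemma lemD : ∀ t ∈ Set.Ico (0:ℝ) 1,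
    t^2 + t^4/6 + t^6/15 + t^8/28 ≤ Psi t := by
  have key : ∀ t ∈ Set.Ico (0:ℝ) 1,
      0 ≤ Psi t - (t^2 + t^4/6 + t^6/15 + t^8/28) := by
    apply nonneg_aux (F' := fun t =>
      (Real.log (1+t) - Real.log (1-t)) - (2*t + 2/3*t^3 + 2/5*t^5 + 2/7*t^7))
    · intro t ht
      have hpsi := hasDerivAt_psi (by linarith [ht.1]) ht.2
      have hp : HasDerivAt (fun t : ℝ => t^2 + t^4/6 + t^6/15 + t^8/28)
          (2*t + 2/3*t^3 + 2/5*t^5 + 2/7*t^7) t := by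
        have h2 := hasDerivAt_pow 2 t
        have h4 := hasDerivAt_pow 4 t
        have h6 := hasDerivAt_pow 6 t
        have h8 := hasDerivAt_pow 8 t
        have := ((h2.add (h4.div_const 6)).add (h6.div_const 15)).add (h8.div_const 28)
        refine this.congr_deriv ?_
        norm_num
        ring
      exact hpsi.sub hp
    · intro t ht
      have := lemC t (Set.Ioo_subset_Ico_self ht)
      linarith
    · norm_num [Psi]
  intro t ht
  linarith [key t ht]

lemma psi_mono : MonotoneOn Psi (Set.Icc (0:ℝ) 1) := by
  apply monotoneOn_of_deriv_nonneg (convex_Icc 0 1) psi_continuous.continuousOn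
  · rw [interior_Icc]
    intro t ht
    exact (hasDerivAt_psi (by linarith [ht.1]) ht.2).differentiableAt.differentiableWithinAt
  · rw [interior_Icc]
    intro t ht
    rw [(hasDerivAt_psi (by linarith [ht.1]) ht.2).deriv]
    have : Real.log (1-t) ≤ Real.log (1+t) :=
      Real.log_le_log (by linarith [ht.2]) (by linarith [ht.1])
    linarith

lemma polybound : ∀ u ∈ Set.Icc (0:ℝ) 1,
    2*Real.log 2*u - (u + u^2/6 + u^3/15 + u^4/28) ≤ 2*Real.log 2*(119/1000) := by
  intro u hu
  have l1 : Real.log 2 < 0.6931471808 := Real.log_two_lt_d9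
  have l2 : 0.6931471803 < Real.log 2 := Real.log_two_gt_d9
  obtain ⟨h0, h1⟩ := hu
  nlinarith [sq_nonneg (u - 0.70721), mul_nonneg (sq_nonneg (u - 0.70721)) h0,
    mul_nonneg (mul_nonneg (sq_nonneg (u - 0.70721)) h0) h0, sq_nonneg u,
    mul_nonneg h0 (sub_nonneg.2 h1)]

set_option maxHeartbeats 2000000 in
/-- With `η = (1/2)(1 - (1 - (ln 4)^{ln 4/(1 - ln 4)})^{1/2})` and
`ε = (4η(1-η))^{1/ln 4} - 4η(1-η)`, if `α`, `γ` solve the approximate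
equations obtained from the Topsøe bounds `f = 4x(1-x)` and
`g = (4x(1-x))^{1/ln 4}` and `β` solves the exact equation, then
`|α - β| ≤ ε / log₂(q-1)` and `|γ - β| ≤ ε / log₂(q-1)`. -/
theorem topsoe_first_guess_bound
    (q : ℝ) (hq : 2 < q)
    (η ε : ℝ)
    (hη : η = (1 / 2) * (1 - (1 - (Real.log 4) ^ (Real.log 4 / (1 - Real.log 4))) ^ ((1 : ℝ) / 2)))
    (hε : ε = (4 * η * (1 - η)) ^ (1 / Real.log 4) - 4 * η * (1 - η))
    (α β γ : ℝ)
    (hα : α ∈ Set.Icc (0 : ℝ) (1 / 2)) (hβ : β ∈ Set.Icc (0 : ℝ) (1 / 2))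
    (hγ : γ ∈ Set.Icc (0 : ℝ) (1 / 2))
    (hαe : α * Real.logb q (q - 1) + (4 * α * (1 - α)) / Real.logb 2 q = Hq q β)
    (hγe : γ * Real.logb q (q - 1) +
      (4 * γ * (1 - γ)) ^ (1 / Real.log 4) / Real.logb 2 q = Hq q β) :
    |α - β| ≤ ε / Real.logb 2 (q - 1) ∧ |γ - β| ≤ ε / Real.logb 2 (q - 1) := by
  have hc : (0:ℝ) < Real.log 2 := Real.log_pos one_lt_two
  have hl4 : 1 < Real.log 4 := by
    rw [show (4:ℝ) = 2^2 by norm_num, Real.log_pow]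
    have := Real.log_two_gt_d9; push_cast; nlinarith
  have hl4pos : (0:ℝ) < Real.log 4 := by linarith
  set s := 1 / Real.log 4 with hsdef
  have hs0 : 0 < s := by positivity
  have hs1 : s < 1 := by rw [hsdef, div_lt_one hl4pos]; linarith
  set T := (Real.log 4) ^ (Real.log 4 / (1 - Real.log 4)) with hTdef
  have hT0 : 0 < T := Real.rpow_pos_of_pos hl4pos _
  have hT1 : T ≤ 1 := Real.rpow_le_one_of_one_le_of_nonpos hl4.le
    (div_nonpos_of_nonneg_of_nonpos hl4pos.le (by linarith))
  have hTe : 4 * η * (1 - η) = T := by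
    have h1T : (0:ℝ) ≤ 1 - T := by linarith
    have hr2 : ((1 - T) ^ ((1:ℝ)/2))^2 = 1 - T := by
      rw [← Real.rpow_natCast ((1-T) ^ ((1:ℝ)/2)) 2, ← Real.rpow_mul h1T]
      norm_num
    rw [hη]
    set r := (1 - T) ^ ((1:ℝ)/2)
    linear_combination -hr2
  have hexp : (Real.log 4 / (1 - Real.log 4)) * (s - 1) = 1 := by
    rw [hsdef]
    have h1 : Real.log 4 ≠ 0 := by linarith
    have h2 : 1 - Real.log 4 ≠ 0 := by linarith
    field_simp
  have hTs : T ^ (s - 1) = Real.log 4 := by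
    rw [hTdef, ← Real.rpow_mul hl4pos.le, hexp, Real.rpow_one]
  have hTss : T ^ s = ε + T := by
    rw [hε, hTe]; ring
  -- Bernoulli-based bound: the maximum of `u ^ s - u` is `ε`
  have berno : ∀ u : ℝ, 0 < u → u ^ s ≤ ε + u := by
    intro u hu
    have hxu : (-1:ℝ) ≤ u / T - 1 := by
      have : 0 < u / T := div_pos hu hT0
      linarith
    have hbern := rpow_one_add_le_one_add_mul_self hxu hs0.le hs1.le
    have h1 : (1 + (u/T - 1)) = u / T := by ring
    rw [h1] at hbern
    have hTsp : 0 < T ^ s := Real.rpow_pos_of_pos hT0 _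
    have hdiv : (u / T) ^ s = u ^ s / T ^ s := Real.div_rpow hu.le hT0.le s
    have key : u ^ s ≤ T ^ s * (1 + s * (u / T - 1)) := by
      have h2 : u ^ s = T ^ s * (u/T) ^ s := by
        rw [hdiv]; field_simp
      rw [h2]
      exact mul_le_mul_of_nonneg_left hbern hTsp.le
    have hTsub : T ^ (s-1) = T ^ s / T := by
      rw [Real.rpow_sub hT0, Real.rpow_one]
    have hslog : s * Real.log 4 = 1 := by
      rw [hsdef]; field_simp
    have e2 : T ^ s * (1 + s * (u / T - 1)) = ε + u := by
      have h3 : T ^ s * (1 + s * (u / T - 1)) = T ^ s + (s * (T^s/T)) * (u - T) := by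
        field_simp
      rw [h3, ← hTsub, hTs, hslog, hTss]
      ring
    linarith [key, e2.le]
  -- numeric lower bound on ε
  have hs1318 : s ≤ 13/18 := by
    rw [hsdef, div_le_div_iff₀ hl4pos (by norm_num)]
    rw [show (4:ℝ) = 2^2 by norm_num, Real.log_pow]
    have := Real.log_two_gt_d9; push_cast; nlinarith
  have han : (419/1000:ℝ) ≤ (3/10:ℝ) ^ ((13:ℝ)/18) := by
    apply le_of_pow_le_pow_left₀ (n := 18) (by norm_num)
      (Real.rpow_nonneg (by norm_num) _)
    rw [← Real.rpow_natCast ((3/10:ℝ) ^ ((13:ℝ)/18)) 18,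
      ← Real.rpow_mul (by norm_num : (0:ℝ) ≤ 3/10)]
    have : ((13:ℝ)/18) * (18:ℕ) = ((13:ℕ):ℝ) := by push_cast; ring
    rw [this, Real.rpow_natCast]
    norm_num
  have h3s : (3/10:ℝ)^((13:ℝ)/18) ≤ (3/10:ℝ) ^ s :=
    Real.rpow_le_rpow_of_exponent_ge (by norm_num) (by norm_num) hs1318
  have hε119 : (119/1000:ℝ) ≤ ε := by
    have := berno (3/10) (by norm_num)
    linarith
  have hε0 : 0 ≤ ε := by linarith
  have berno' : ∀ u : ℝ, 0 ≤ u → u ^ s ≤ ε + u := by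
    intro u hu
    rcases eq_or_lt_of_le hu with h | h
    · rw [← h, Real.zero_rpow hs0.ne']; linarith
    · exact berno u h
  have fact4 : ∀ u : ℝ, 0 ≤ u → u ≤ 1 → u ≤ u ^ s := by
    intro u h0 h1
    rcases eq_or_lt_of_le h0 with h | h
    · rw [← h, Real.zero_rpow hs0.ne']
    · calc u = u ^ (1:ℝ) := (Real.rpow_one u).symm
        _ ≤ u ^ s := Real.rpow_le_rpow_of_exponent_ge h h1 hs1.le
  -- logarithm facts
  have hq1 : (1:ℝ) < q - 1 := by linarith
  have hlq1 : 0 < Real.logb 2 (q-1) := Real.logb_pos one_lt_two hq1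
  have hlogq : 0 < Real.log q := Real.log_pos (by linarith)
  have hlq : 0 < Real.logb 2 q := Real.logb_pos one_lt_two (by linarith)
  have ent_eq : ∀ x ∈ Set.Icc (0:ℝ) (1/2:ℝ),
      -(x * Real.log x) - (1-x) * Real.log (1-x) = Real.log 2 - Psi (1-2*x) / 2 := by
    intro x hx
    rcases eq_or_lt_of_le hx.1 with h0 | h0
    · rw [← h0]; norm_num [Psi]
    · have hx1 : 0 < 1 - x := by linarith [hx.2]
      have h1 : (1:ℝ) + (1-2*x) = 2*(1-x) := by ring
      have h2 : (1:ℝ) - (1-2*x) = 2*x := by ring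
      rw [Psi, h1, h2, Real.log_mul (by norm_num) hx1.ne',
        Real.log_mul (by norm_num) h0.ne']
      ring
  have hlb : Real.logb q (q-1) * Real.logb 2 q = Real.logb 2 (q-1) := by
    simp only [Real.logb]
    field_simp
  have Hq_eq : Hq q β * Real.logb 2 q
      = β * Real.logb 2 (q-1) + (Real.log 2 - Psi (1-2*β)/2) / Real.log 2 := by
    have h := ent_eq β hβ
    have key : Hq q β = β * Real.logb q (q-1) + (Real.log 2 - Psi (1-2*β)/2) / Real.log q := by
      rw [← h]
      simp only [Hq, Real.logb]
      field_simp
      ring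
    rw [key, add_mul, mul_assoc, hlb]
    congr 1
    rw [Real.logb]
    field_simp
  -- the two transformed equations
  have Eα : α * Real.logb 2 (q-1) + 4*α*(1-α)
      = β * Real.logb 2 (q-1) + (Real.log 2 - Psi (1-2*β)/2) / Real.log 2 := by
    have h3 : (α * Real.logb q (q-1)) * Real.logb 2 q + 4*α*(1-α)
        = Hq q β * Real.logb 2 q := by
      have := congrArg (fun z => z * Real.logb 2 q) hαe
      simpa [add_mul, div_mul_cancel₀, hlq.ne'] using this
    rw [mul_assoc, hlb] at h3
    rw [h3, Hq_eq]
  have Eγ : γ * Real.logb 2 (q-1) + (4*γ*(1-γ)) ^ s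
      = β * Real.logb 2 (q-1) + (Real.log 2 - Psi (1-2*β)/2) / Real.log 2 := by
    have h3 : (γ * Real.logb q (q-1)) * Real.logb 2 q + (4*γ*(1-γ)) ^ s
        = Hq q β * Real.logb 2 q := by
      have := congrArg (fun z => z * Real.logb 2 q) hγe
      simpa [add_mul, div_mul_cancel₀, hlq.ne'] using this
    rw [mul_assoc, hlb] at h3
    rw [h3, Hq_eq]
  -- facts about B x = (log 2 - Psi (1-2x)/2) / log 2
  have tmem : ∀ x : ℝ, x ∈ Set.Icc (0:ℝ) (1/2) → (1-2*x) ∈ Set.Icc (0:ℝ) 1 :=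
    fun x hx => ⟨by linarith [hx.2], by linarith [hx.1]⟩
  have fact1 : ∀ x ∈ Set.Icc (0:ℝ) (1/2:ℝ),
      4*x*(1-x) ≤ (Real.log 2 - Psi (1-2*x)/2) / Real.log 2 := by
    intro x hx
    rw [le_div_iff₀ hc]
    have := psi_le (1-2*x) (tmem x hx)
    nlinarith [this]
  have fact2 : ∀ x ∈ Set.Icc (0:ℝ) (1/2:ℝ),
      (Real.log 2 - Psi (1-2*x)/2) / Real.log 2 - 4*x*(1-x) ≤ ε := by
    intro x hx
    rcases eq_or_lt_of_le hx.1 with h0 | h0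
    · rw [← h0]
      have hp1 : Psi 1 = 2 * Real.log 2 := by norm_num [Psi]
      rw [show (1:ℝ)-2*0 = 1 by norm_num, hp1]
      have : (Real.log 2 - 2 * Real.log 2/2)/Real.log 2 = 0 := by
        field_simp; ring
      rw [this]; linarith
    · have ht : (1-2*x) ∈ Set.Ico (0:ℝ) 1 := ⟨by linarith [hx.2], by linarith⟩
      have hD := lemD (1-2*x) ht
      have hP := polybound ((1-2*x)^2)
        ⟨by positivity, by nlinarith [ht.1, ht.2]⟩
      rw [sub_le_iff_le_add, div_le_iff₀ hc]
      have hmul := mul_le_mul_of_nonneg_left hε119 hc.le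
      nlinarith [hD, hP, hmul]
  have fact3 : ∀ x ∈ Set.Icc (0:ℝ) (1/2:ℝ), ∀ y ∈ Set.Icc (0:ℝ) (1/2:ℝ), x ≤ y →
      (Real.log 2 - Psi (1-2*x)/2)/Real.log 2
        ≤ (Real.log 2 - Psi (1-2*y)/2)/Real.log 2 := by
    intro x hx y hy hxy
    have := psi_mono (tmem y hy) (tmem x hx) (by linarith)
    apply div_le_div_of_nonneg_right ?_ hc.le
    · linarith
  constructor
  · rw [le_div_iff₀ hlq1]
    rcases le_total β α with hh | hh
    · rw [abs_of_nonneg (by linarith)]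
      have e1 : (α - β) * Real.logb 2 (q-1)
          = (Real.log 2 - Psi (1-2*β)/2)/Real.log 2 - 4*α*(1-α) := by
        linear_combination Eα
      have h2 := fact3 β hβ α hα hh
      have h3 := fact2 α hα
      linarith
    · rw [abs_of_nonpos (by linarith)]
      have e1 : (α - β) * Real.logb 2 (q-1)
          = (Real.log 2 - Psi (1-2*β)/2)/Real.log 2 - 4*α*(1-α) := by
        linear_combination Eα
      have h2 := fact3 α hα β hβ hh
      have h3 := fact1 α hα
      nlinarith [mul_nonneg (sub_nonneg.2 hh) hlq1.le]
  · rw [le_div_iff₀ hlq1]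
    have hu0 : (0:ℝ) ≤ 4*γ*(1-γ) := by nlinarith [hγ.1, hγ.2]
    have hu1 : 4*γ*(1-γ) ≤ 1 := by nlinarith [hγ.1, hγ.2]
    have h5 := berno' (4*γ*(1-γ)) hu0
    have h6 := fact4 (4*γ*(1-γ)) hu0 hu1
    have h7 := fact1 γ hγ
    have h8 := fact2 γ hγ
    rcases le_total β γ with hh | hh
    · rw [abs_of_nonneg (by linarith)]
      have e1 : (γ - β) * Real.logb 2 (q-1)
          = (Real.log 2 - Psi (1-2*β)/2)/Real.log 2 - (4*γ*(1-γ)) ^ s := by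
        linear_combination Eγ
      have h2 := fact3 β hβ γ hγ hh
      linarith
    · rw [abs_of_nonpos (by linarith)]
      have e1 : (γ - β) * Real.logb 2 (q-1)
          = (Real.log 2 - Psi (1-2*β)/2)/Real.log 2 - (4*γ*(1-γ)) ^ s := by
        linear_combination Eγ
      have h2 := fact3 γ hγ β hβ hh
      linarith
end

section
/- Let ε > 0 and let q be a real number with q ≥ 2 and q ≥ 2^{2/ε}. Then for every x ∈ [0, (q−1)/q], one has |H_q(x) − x| ≤ ε. -/
open Real

/-- If `q ≥ 2^{2/ε}`, then `|H_q(x) - x| ≤ ε` for all `x ∈ [0, (q-1)/q]`. -/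
theorem Hq_close_to_id
    (ε : ℝ) (hε : 0 < ε) (q : ℝ) (hq2 : 2 ≤ q) (hq : (2 : ℝ) ^ (2 / ε) ≤ q) :
    ∀ x ∈ Set.Icc (0 : ℝ) ((q - 1) / q), |Hq q x - x| ≤ ε := by
  intro x hx
  obtain ⟨hx0, hx1⟩ := hx
  have hq0 : (0:ℝ) < q := by linarith
  have hq1 : (1:ℝ) < q := by linarith
  have hlq : 0 < Real.log q := Real.log_pos hq1
  have hl2pos : 0 < Real.log 2 := Real.log_pos (by norm_num)
  have hkey : Real.log 2 / Real.log q ≤ ε / 2 := by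
    rw [div_le_iff₀ hlq]
    have h := Real.log_le_log (by positivity) hq
    rw [Real.log_rpow (by norm_num)] at h
    have h2 : 2 / ε * Real.log 2 ≤ Real.log q := h
    rw [div_mul_eq_mul_div, div_le_iff₀ hε] at h2
    nlinarith
  have hxle1 : x ≤ 1 := by
    refine hx1.trans ?_
    rw [div_le_one hq0]; linarith
  have hfr : (q - 1) / q = 1 - 1/q := by field_simp
  have h1x : 1/q ≤ 1 - x := by
    rw [hfr] at hx1; linarith
  have h1xpos : 0 < 1 - x := lt_of_lt_of_le (by positivity) h1x
  -- rewrite Hq q x - x as N / log q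
  have hlogdiv : Real.log ((q-1)/q) = Real.log (q-1) - Real.log q :=
    Real.log_div (by linarith) (by linarith)
  set N : ℝ := x * Real.log ((q-1)/q) + Real.binEntropy x with hN
  have hiff : Hq q x - x = N / Real.log q := by
    have hbe : Real.binEntropy x = -(x * Real.log x) - (1-x) * Real.log (1-x) := by
      rw [Real.binEntropy_eq_negMulLog_add_negMulLog_one_sub]
      simp [Real.negMulLog]; ring
    simp only [hN, Hq, Real.logb, hlogdiv, hbe]
    field_simp
    ring
  -- bounds on N
  have hAle : x * Real.log ((q-1)/q) ≤ 0 := by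
    apply mul_nonpos_of_nonneg_of_nonpos hx0
    apply Real.log_nonpos
    · exact div_nonneg (by linarith) hq0.le
    · rw [div_le_one hq0]; linarith
  have hAge : -Real.log 2 ≤ x * Real.log ((q-1)/q) := by
    have hhalf : (1:ℝ)/2 ≤ (q-1)/q := by
      rw [div_le_div_iff₀ (by norm_num) hq0]; linarith
    have hlg : Real.log (1/2) ≤ Real.log ((q-1)/q) :=
      Real.log_le_log (by norm_num) hhalf
    rw [Real.log_div one_ne_zero (by norm_num), Real.log_one] at hlg
    have hlgneg : Real.log ((q-1)/q) ≤ 0 := by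
      apply Real.log_nonpos
      · exact div_nonneg (by linarith) hq0.le
      · rw [div_le_one hq0]; linarith
    nlinarith
  have hB0 : 0 ≤ Real.binEntropy x := Real.binEntropy_nonneg hx0 hxle1
  have hB1 : Real.binEntropy x ≤ Real.log 2 := Real.binEntropy_le_log_two
  have hNabs : |N| ≤ Real.log 2 := by
    rw [abs_le]; constructor <;> simp only [hN] <;> nlinarith
  rw [hiff, abs_div, abs_of_pos hlq]
  calc |N| / Real.log q ≤ Real.log 2 / Real.log q := by
        gcongr
    _ ≤ ε / 2 := hkey
    _ ≤ ε := by linarith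
end
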